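/- arXiv:1307.6316 — 9 statements merged into one kernel-verified Lean document; each statement's English description precedes it below -/
import Mathlib

section
/- If A is a finite d-dimensional subset of ℝ^d (i.e., A is not contained in any affine hyperplane), then |A + A| ≥ (d+1)|A| - d(d+1)/2. -/
open Finset Pointwise Module

noncomputable instance lexmon (d : ℕ) : IsOrderedCancelAddMonoid (Lex (Fin d → ℝ)) :=
  inferInstance

noncomputable instance (priority := 2000) lexlo (d : ℕ) : LinearOrder (Lex (Fin d → ℝ)) :=
  letI : WellFoundedLT (Fin d) := Finite.to_wellFoundedLT
  Pi.Lex.linearOrder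

private lemma mem_span_half {d : ℕ} {s : AffineSubspace ℝ (Fin d → ℝ)} {v b c : Fin d → ℝ}
    (hb : b ∈ s) (hc : c ∈ s) (h : v + v = b + c) : v ∈ s := by
  have h2 := s.smul_vsub_vadd_mem (1/2 : ℝ) hb hc hc
  have he : (1/2 : ℝ) • (b -ᵥ c) +ᵥ c = v := by
    funext i
    have hi := congrFun h i
    simp only [vsub_eq_sub, vadd_eq_add, Pi.smul_apply, Pi.sub_apply, Pi.add_apply,
      smul_eq_mul] at hi ⊢
    linarith
  rwa [he] at h2

private lemma mem_span_addsub {d : ℕ} {s : AffineSubspace ℝ (Fin d → ℝ)} {v b c : Fin d → ℝ}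
    (hb : b ∈ s) (hc : c ∈ s) (hv : v ∈ s) : b + c - v ∈ s := by
  have h2 := s.smul_vsub_vadd_mem (1 : ℝ) hb hv hc
  have he : (1 : ℝ) • (b -ᵥ v) +ᵥ c = b + c - v := by
    funext i
    simp only [vsub_eq_sub, vadd_eq_add, Pi.smul_apply, Pi.sub_apply, Pi.add_apply,
      smul_eq_mul, one_mul]
    ring
  rwa [he] at h2

private lemma card_ge_rank {d : ℕ} (G : Finset (Fin d → ℝ)) (hG : G.Nonempty) :
    finrank ℝ (vectorSpan ℝ (G : Set (Fin d → ℝ))) + 1 ≤ G.card := by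
  classical
  obtain ⟨n, hn⟩ : ∃ n, G.card = n + 1 := ⟨G.card - 1, (Nat.succ_pred_eq_of_pos hG.card_pos).symm⟩
  have h := finrank_vectorSpan_image_finset_le ℝ id G hn
  rw [Finset.image_id] at h
  omega

private lemma freiman_aux (d : ℕ) : ∀ n : ℕ, ∀ A : Finset (Fin d → ℝ), A.card ≤ n → A.Nonempty →
    ∀ k : ℕ, finrank ℝ (vectorSpan ℝ (A : Set (Fin d → ℝ))) = k →
    ((A + A).card : ℤ) ≥ (k + 1) * A.card - k * (k + 1) / 2 := by
  intro n
  induction n with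
  | zero =>
    intro A h hne k _
    exact absurd (Finset.card_eq_zero.mp (Nat.le_zero.mp h)) hne.ne_empty
  | succ n ih =>
    intro A hAn hne k hk
    classical
    obtain ⟨v, hvA, hvmax⟩ := A.exists_max_image toLex hne
    set A' := A.erase v with hA'def
    by_cases hA' : A'.Nonempty
    swap
    · -- A = {v}
      have hAe : A.erase v = ∅ := Finset.not_nonempty_iff_eq_empty.mp hA'
      have hA1 : A = {v} := by
        have h1 := Finset.insert_erase hvA
        rw [hAe] at h1
        simpa using h1.symm
      subst hA1
      have hk0 : k = 0 := by
        rw [Finset.coe_singleton, vectorSpan_singleton] at hk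
        simpa using hk.symm
      subst hk0
      simp [Finset.singleton_add_singleton]
    · have hvA' : v ∉ A' := Finset.notMem_erase v A
      have hins : insert v A' = A := Finset.insert_erase hvA
      have hcard : A.card = A'.card + 1 := by
        rw [← hins, Finset.card_insert_of_notMem hvA']
      have hA'n : A'.card ≤ n := by omega
      have hAc : (A.card : ℤ) = (A'.card : ℤ) + 1 := by exact_mod_cast hcard
      have hlt : ∀ a ∈ A', toLex a < toLex v := fun a ha =>
        lt_of_le_of_ne (hvmax a (Finset.mem_of_mem_erase ha))
          (fun he => (Finset.ne_of_mem_erase ha) (toLex.injective he))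
      have decomp : ∀ a, (v + a) ∈ A' + A' → ∃ b ∈ A', ∃ c ∈ A', v + a = b + c := by
        intro a h
        obtain ⟨b, hb, c, hc, h⟩ := Finset.mem_add.mp h
        exact ⟨b, hb, c, hc, h.symm⟩
      have hvv : v + v ∉ A' + A' := by
        intro hmem
        obtain ⟨b, hb, c, hc, hbc⟩ := decomp v hmem
        have h1 : toLex v + toLex v = toLex b + toLex c := congrArg toLex hbc
        have h2 : toLex b + toLex c < toLex v + toLex v :=
          add_lt_add (hlt b hb) (hlt c hc)
        exact absurd (h1 ▸ h2) (lt_irrefl _)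
      have count : ∀ G : Finset (Fin d → ℝ), G ⊆ A → (∀ a ∈ G, v + a ∉ A' + A') →
          (A' + A').card + G.card ≤ (A + A).card := by
        intro G hGA hGnot
        have h1 : A' + A' ⊆ A + A :=
          Finset.add_subset_add (Finset.erase_subset v A) (Finset.erase_subset v A)
        have h2 : G.image (v + ·) ⊆ A + A := by
          intro x hx
          obtain ⟨a, ha, rfl⟩ := Finset.mem_image.mp hx
          exact Finset.add_mem_add hvA (hGA ha)
        have hdisj : Disjoint (A' + A') (G.image (v + ·)) := by
          rw [Finset.disjoint_right]
          rintro x hx hx'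
          obtain ⟨a, ha, rfl⟩ := Finset.mem_image.mp hx
          exact hGnot a ha hx'
        calc (A' + A').card + G.card
            = ((A' + A') ∪ G.image (v + ·)).card := by
              rw [Finset.card_union_of_disjoint hdisj,
                Finset.card_image_of_injective _ (add_right_injective v)]
          _ ≤ (A + A).card := Finset.card_le_card (Finset.union_subset h1 h2)
      by_cases hv : v ∈ affineSpan ℝ (A' : Set (Fin d → ℝ))
      · -- Case 1 : removing v keeps the affine span
        have hspan_eq : affineSpan ℝ (A : Set (Fin d → ℝ)) = affineSpan ℝ (A' : Set (Fin d → ℝ)) := by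
          rw [← hins, Finset.coe_insert]
          exact affineSpan_insert_eq_affineSpan ℝ hv
        have hk' : finrank ℝ (vectorSpan ℝ (A' : Set (Fin d → ℝ))) = k := by
          rw [← hk, ← direction_affineSpan, ← direction_affineSpan, hspan_eq]
        set G := A.filter (fun a => v + a ∉ A' + A') with hGdef
        have hGsub : G ⊆ A := Finset.filter_subset _ _
        have hvG : v ∈ G := Finset.mem_filter.mpr ⟨hvA, hvv⟩
        have key : ∀ m : ℕ, ∀ a ∈ A, (A.filter (fun x => toLex a < toLex x)).card ≤ m →
            a ∈ affineSpan ℝ (G : Set (Fin d → ℝ)) := by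
          intro m
          induction m with
          | zero =>
            intro a ha h0
            by_cases haG : v + a ∉ A' + A'
            · exact mem_affineSpan ℝ (Finset.mem_coe.mpr (Finset.mem_filter.mpr ⟨ha, haG⟩))
            · exfalso
              rw [not_not] at haG
              obtain ⟨b, hb, c, hc, hbc⟩ := decomp a haG
              have hab : toLex a < toLex b := by
                have h1 : toLex v + toLex a = toLex b + toLex c := congrArg toLex hbc
                have h2 : toLex b + toLex c < toLex v + toLex b := by
                  rw [add_comm (toLex v)]
                  exact add_lt_add_right (hlt c hc) _
                exact lt_of_add_lt_add_left (h1 ▸ h2)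
              have hbmem : b ∈ A.filter (fun x => toLex a < toLex x) :=
                Finset.mem_filter.mpr ⟨Finset.mem_of_mem_erase hb, hab⟩
              have := Finset.card_pos.mpr ⟨b, hbmem⟩
              omega
          | succ m ihm =>
            intro a ha hm
            by_cases haG : v + a ∉ A' + A'
            · exact mem_affineSpan ℝ (Finset.mem_coe.mpr (Finset.mem_filter.mpr ⟨ha, haG⟩))
            · rw [not_not] at haG
              obtain ⟨b, hb, c, hc, hbc⟩ := decomp a haG
              have hab : toLex a < toLex b := by
                have h1 : toLex v + toLex a = toLex b + toLex c := congrArg toLex hbc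
                have h2 : toLex b + toLex c < toLex v + toLex b := by
                  rw [add_comm (toLex v)]
                  exact add_lt_add_right (hlt c hc) _
                exact lt_of_add_lt_add_left (h1 ▸ h2)
              have hac : toLex a < toLex c := by
                have h1 : toLex v + toLex a = toLex c + toLex b := by
                  rw [add_comm (toLex c)]
                  exact congrArg toLex hbc
                have h2 : toLex c + toLex b < toLex v + toLex c := by
                  rw [add_comm (toLex v)]
                  exact add_lt_add_right (hlt b hb) _
                exact lt_of_add_lt_add_left (h1 ▸ h2)
              have smaller : ∀ x : Fin d → ℝ, toLex a < toLex x → x ∈ A →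
                  (A.filter (fun y => toLex x < toLex y)).card ≤ m := by
                intro x hax hxA
                have hsub : A.filter (fun y => toLex x < toLex y) ⊆
                    A.filter (fun y => toLex a < toLex y) := by
                  intro y hy
                  obtain ⟨hyA, hxy⟩ := Finset.mem_filter.mp hy
                  exact Finset.mem_filter.mpr ⟨hyA, hax.trans hxy⟩
                have hxmem : x ∈ A.filter (fun y => toLex a < toLex y) :=
                  Finset.mem_filter.mpr ⟨hxA, hax⟩
                have hxnot : x ∉ A.filter (fun y => toLex x < toLex y) :=
                  fun h => lt_irrefl _ (Finset.mem_filter.mp h).2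
                have := Finset.card_lt_card
                  ((Finset.ssubset_iff_of_subset hsub).mpr ⟨x, hxmem, hxnot⟩)
                omega
              have hb' : b ∈ affineSpan ℝ (G : Set (Fin d → ℝ)) :=
                ihm b (Finset.mem_of_mem_erase hb) (smaller b hab (Finset.mem_of_mem_erase hb))
              have hc' : c ∈ affineSpan ℝ (G : Set (Fin d → ℝ)) :=
                ihm c (Finset.mem_of_mem_erase hc) (smaller c hac (Finset.mem_of_mem_erase hc))
              have hv' : v ∈ affineSpan ℝ (G : Set (Fin d → ℝ)) :=
                mem_affineSpan ℝ (Finset.mem_coe.mpr hvG)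
              have hmem := mem_span_addsub hb' hc' hv'
              have haeq : a = b + c - v := by
                rw [← hbc, add_sub_cancel_left]
              rwa [haeq]
        have hspanG : affineSpan ℝ (A : Set (Fin d → ℝ)) ≤ affineSpan ℝ (G : Set (Fin d → ℝ)) := by
          rw [affineSpan_le]
          intro a ha
          exact key (A.filter (fun x => toLex a < toLex x)).card a (Finset.mem_coe.mp ha) le_rfl
        have hkG : finrank ℝ (vectorSpan ℝ (G : Set (Fin d → ℝ))) = k := by
          have h1 : vectorSpan ℝ (G : Set (Fin d → ℝ)) ≤ vectorSpan ℝ (A : Set (Fin d → ℝ)) :=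
            vectorSpan_mono ℝ (Finset.coe_subset.mpr hGsub)
          have h2 : vectorSpan ℝ (A : Set (Fin d → ℝ)) ≤ vectorSpan ℝ (G : Set (Fin d → ℝ)) := by
            rw [← direction_affineSpan, ← direction_affineSpan]
            exact AffineSubspace.direction_le hspanG
          rw [← hk, le_antisymm h1 h2]
        have hGcard : k + 1 ≤ G.card := by
          have := card_ge_rank G ⟨v, hvG⟩
          omega
        have ihA' := ih A' hA'n hA' k hk'
        have hcount := count G hGsub (fun a haG => (Finset.mem_filter.mp haG).2)
        have hcount' : ((A' + A').card : ℤ) + G.card ≤ ((A + A).card : ℤ) := by exact_mod_cast hcount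
        have hG' : (k : ℤ) + 1 ≤ (G.card : ℤ) := by exact_mod_cast hGcard
        have hmul : ((k : ℤ) + 1) * (A.card : ℤ) = ((k : ℤ) + 1) * (A'.card : ℤ) + (k + 1) := by
          rw [hAc]; ring
        linarith
      · -- Case 2 : removing v drops the dimension by one
        obtain ⟨p, hpA'⟩ := hA'
        have hpspan : p ∈ affineSpan ℝ (A' : Set (Fin d → ℝ)) :=
          mem_affineSpan ℝ (Finset.mem_coe.mpr hpA')
        have hGnot : ∀ a ∈ A, v + a ∉ A' + A' := by
          intro a ha hmem
          obtain ⟨b, hb, c, hc, hbc⟩ := decomp a hmem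
          have hbs : b ∈ affineSpan ℝ (A' : Set (Fin d → ℝ)) :=
            mem_affineSpan ℝ (Finset.mem_coe.mpr hb)
          have hcs : c ∈ affineSpan ℝ (A' : Set (Fin d → ℝ)) :=
            mem_affineSpan ℝ (Finset.mem_coe.mpr hc)
          by_cases hav : a = v
          · exact hv (mem_span_half hbs hcs (hav ▸ hbc))
          · have has : a ∈ affineSpan ℝ (A' : Set (Fin d → ℝ)) :=
              mem_affineSpan ℝ (Finset.mem_coe.mpr (Finset.mem_erase.mpr ⟨hav, ha⟩))
            have hveq : v = b + c - a := by rw [← hbc, add_sub_cancel_right]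
            exact hv (hveq ▸ mem_span_addsub hbs hcs has)
        set W := vectorSpan ℝ (A' : Set (Fin d → ℝ)) with hWdef
        have hxW : v -ᵥ p ∉ W := by
          intro hmem
          apply hv
          rw [← AffineSubspace.vsub_right_mem_direction_iff_mem hpspan v, direction_affineSpan]
          exact hmem
        have hdirA : vectorSpan ℝ (A : Set (Fin d → ℝ)) = Submodule.span ℝ {v -ᵥ p} ⊔ W := by
          rw [← direction_affineSpan, ← hins, Finset.coe_insert, ← affineSpan_insert_affineSpan,
            AffineSubspace.direction_affineSpan_insert hpspan, direction_affineSpan]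
        have hx0 : v -ᵥ p ≠ 0 := fun h0 => hxW (by rw [h0]; exact W.zero_mem)
        have hrank1 : finrank ℝ (Submodule.span ℝ ({v -ᵥ p} : Set (Fin d → ℝ))) = 1 :=
          finrank_span_singleton hx0
        have hfin : k = finrank ℝ W + 1 := by
          have hle : finrank ℝ ↥(Submodule.span ℝ ({v -ᵥ p} : Set (Fin d → ℝ)) ⊔ W) ≤
              finrank ℝ W + 1 := by
            have h := Submodule.finrank_sup_add_finrank_inf_eq
              (Submodule.span ℝ ({v -ᵥ p} : Set (Fin d → ℝ))) W
            omega
          have hmem : v -ᵥ p ∈ Submodule.span ℝ ({v -ᵥ p} : Set (Fin d → ℝ)) ⊔ W :=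
            Submodule.mem_sup_left (Submodule.mem_span_singleton_self _)
          have hWlt : W < Submodule.span ℝ ({v -ᵥ p} : Set (Fin d → ℝ)) ⊔ W :=
            lt_of_le_of_ne le_sup_right (fun he => hxW (by rw [he]; exact hmem))
          have hlt := Submodule.finrank_lt_finrank_of_lt hWlt
          rw [← hk, hdirA]
          omega
        have ihA' := ih A' hA'n ⟨p, hpA'⟩ (finrank ℝ W) rfl
        have hcount := count A subset_rfl hGnot
        have hcount' : ((A' + A').card : ℤ) + A.card ≤ ((A + A).card : ℤ) := by exact_mod_cast hcount
        set k' := finrank ℝ W with hk'def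
        obtain rfl : k = k' + 1 := hfin
        obtain ⟨m1, hm1⟩ := Int.even_mul_succ_self (k' : ℤ)
        have hq1 : (k' : ℤ) * ((k' : ℤ) + 1) / 2 = m1 := by rw [hm1]; omega
        have hq2 : (((k' : ℕ) + 1 : ℕ) : ℤ) * ((((k' : ℕ) + 1 : ℕ) : ℤ) + 1) / 2 = m1 + (k' : ℤ) + 1 := by
          push_cast
          have hx : ((k' : ℤ) + 1) * ((k' : ℤ) + 1 + 1) = (k' : ℤ) * ((k' : ℤ) + 1) + 2 * ((k' : ℤ) + 1) := by
            ring
          rw [hx, hm1]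
          omega
        have hmul : ((((k' : ℕ) + 1 : ℕ) : ℤ) + 1) * (A.card : ℤ) =
            ((k' : ℤ) + 1) * (A'.card : ℤ) + (A'.card : ℤ) + (k' : ℤ) + 2 := by
          push_cast
          rw [hAc]; ring
        push_cast at ihA' hq2 hmul ⊢
        linarith

/-- Freiman: if `A` is a finite `d`-dimensional set in `ℝ^d`, then
`|A + A| ≥ (d+1)|A| - d(d+1)/2`. -/
theorem stmt_0 (d : ℕ) (A : Finset (Fin d → ℝ))
    (hA : affineSpan ℝ (A : Set (Fin d → ℝ)) = ⊤) :
    ((A + A).card : ℤ) ≥ (d + 1) * A.card - d * (d + 1) / 2 := by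
  have hne : A.Nonempty := by
    rcases A.eq_empty_or_nonempty with h | h
    · exfalso
      rw [h] at hA
      simp at hA
    · exact h
  have hk : finrank ℝ (vectorSpan ℝ (A : Set (Fin d → ℝ))) = d := by
    rw [← direction_affineSpan, hA, AffineSubspace.direction_top]
    simp [Module.finrank_fin_fun]
  exact freiman_aux d A.card A le_rfl hne d hk
end

section
/- If A is a finite d-dimensional subset of ℝ^d, then for every k ≥ 1, |kA| ≥ C(d+k-1, k-1)·|A| - (k-1)·C(d+k-1, k). -/
open Finset Pointwise

/-- `k`-fold Minkowski sum of a finite set (with `kfold 0 A = {0}`). -/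
def kfold {E : Type*} [DecidableEq E] [AddMonoid E] : ℕ → Finset E → Finset E
  | 0, _ => {0}
  | n + 1, A => kfold n A + A

section FMRaux

variable {E : Type*} [DecidableEq E] [AddCommMonoid E]

lemma mem_kfold {k : ℕ} {A : Finset E} {x : E} :
    x ∈ kfold k A ↔
      ∃ m : Multiset E, Multiset.card m = k ∧ (∀ a ∈ m, a ∈ A) ∧ m.sum = x := by
  induction k generalizing x with
  | zero =>
    simp only [kfold, Finset.mem_singleton]
    constructor
    · rintro rfl; exact ⟨0, by simp⟩
    · rintro ⟨m, hm, -, rfl⟩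
      rw [Multiset.card_eq_zero] at hm; simp [hm]
  | succ n ih =>
    simp only [kfold, Finset.mem_add]
    constructor
    · rintro ⟨y, hy, z, hz, rfl⟩
      obtain ⟨m, hm, hmem, rfl⟩ := ih.mp hy
      exact ⟨z ::ₘ m, by simp [hm], by
        intro a ha
        rcases Multiset.mem_cons.mp ha with rfl | h
        exacts [hz, hmem a h], by simp [add_comm]⟩
    · rintro ⟨m, hm, hmem, rfl⟩
      obtain ⟨z, m', rfl⟩ : ∃ z m', m = z ::ₘ m' := by
        have : m ≠ 0 := by
          intro h0; rw [h0] at hm; simp at hm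
        obtain ⟨z, hz⟩ := Multiset.exists_mem_of_ne_zero this
        exact ⟨z, m.erase z, (Multiset.cons_erase hz).symm⟩
      refine ⟨m'.sum, ih.mpr ⟨m', by simpa using hm, fun a ha => hmem a (by simp [ha]), rfl⟩,
        z, hmem z (by simp), by simp [add_comm]⟩

lemma kfold_mono {k : ℕ} {A B : Finset E} (h : A ⊆ B) : kfold k A ⊆ kfold k B := by
  induction k with
  | zero => simp [kfold]
  | succ n ih =>
    simp only [kfold]
    exact Finset.add_subset_add ih h

end FMRaux

section FMRgeom

variable {d : ℕ}

local notation "V" => (Fin d → ℝ)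

lemma multiset_sum_inj {n K : ℕ} {g : Fin n → V} (hg : AffineIndependent ℝ g)
    (μ ν : Multiset (Fin n)) (hμ : Multiset.card μ = K) (hν : Multiset.card ν = K)
    (h : (μ.map g).sum = (ν.map g).sum) : μ = ν := by
  have count_sum : ∀ m : Multiset (Fin n), ∑ i : Fin n, (m.count i : ℝ) = Multiset.card m := by
    intro m
    rw [← Nat.cast_sum]
    congr 1
    exact m.toFinset_sum_count_eq ▸ (Finset.sum_subset (Finset.subset_univ _)
      (fun x _ hx => Multiset.count_eq_zero_of_notMem (by simpa using hx))).symm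
  have sum_eq : ∀ m : Multiset (Fin n), ∑ i : Fin n, (m.count i : ℝ) • g i = (m.map g).sum := by
    intro m
    rw [Finset.sum_multiset_map_count]
    rw [← Finset.sum_subset (Finset.subset_univ m.toFinset)
      (fun x _ hx => by simp [Multiset.count_eq_zero_of_notMem (by simpa using hx)])]
    refine Finset.sum_congr rfl fun i _ => ?_
    rw [Nat.cast_smul_eq_nsmul]
  have key := hg.eq_of_sum_eq_sum (s := Finset.univ)
    (w₁ := fun i => (μ.count i : ℝ)) (w₂ := fun i => (ν.count i : ℝ))
    (by rw [count_sum, count_sum, hμ, hν]) (by rw [sum_eq, sum_eq, h])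
  ext i
  have h2 : (μ.count i : ℝ) = ν.count i := key i (Finset.mem_univ i)
  exact_mod_cast h2

lemma exists_basis_finset (A : Finset V) (hA : affineSpan ℝ (A : Set V) = ⊤) :
    ∃ B : Finset V, B ⊆ A ∧ affineSpan ℝ (B : Set V) = ⊤ ∧
      AffineIndependent ℝ ((↑) : ↥B → V) ∧ B.card = d + 1 := by
  obtain ⟨t, hts, htspan, htind⟩ := exists_affineIndependent ℝ V (A : Set V)
  have htfin : t.Finite := A.finite_toSet.subset hts
  refine ⟨htfin.toFinset, ?_, ?_, ?_, ?_⟩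
  · intro x hx
    simpa using hts (htfin.mem_toFinset.mp hx)
  · rw [htfin.coe_toFinset, htspan, hA]
  · exact htind.mono (by simp [htfin.coe_toFinset] : (↑htfin.toFinset : Set V) ⊆ t)
  · have hind2 : AffineIndependent ℝ ((↑) : ↥htfin.toFinset → V) :=
      htind.mono (by simp [htfin.coe_toFinset] : (↑htfin.toFinset : Set V) ⊆ t)
    have hspan2 : affineSpan ℝ (Set.range ((↑) : ↥htfin.toFinset → V)) = ⊤ := by
      rw [Subtype.range_coe_subtype]
      have : {x | x ∈ htfin.toFinset} = (htfin.toFinset : Set V) := rfl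
      rw [this, htfin.coe_toFinset, htspan, hA]
    have := hind2.affineSpan_eq_top_iff_card_eq_finrank_add_one.mp hspan2
    rw [Module.finrank_fintype_fun_eq_card, Fintype.card_fin, Fintype.card_coe] at this
    exact this

lemma affineMap_eq_on_affineSpan {s : Set V} {g : V →ᵃ[ℝ] ℝ} {c : ℝ}
    (h : ∀ y ∈ s, g y = c) {x : V} (hx : x ∈ affineSpan ℝ s) : g x = c := by
  let Q : AffineSubspace ℝ V :=
    { carrier := {x | g x = c}
      smul_vsub_vadd_mem' := by
        intro t p1 p2 p3 h1 h2 h3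
        simp only [Set.mem_setOf_eq] at h1 h2 h3 ⊢
        have : g (t • (p1 -ᵥ p2) +ᵥ p3) = t * (g p1 - g p2) + g p3 := by
          rw [AffineMap.map_vadd, map_smul, AffineMap.linearMap_vsub]
          simp [smul_eq_mul]
        rw [this, h1, h2, h3]; ring }
  have hle : affineSpan ℝ s ≤ Q := affineSpan_le.mpr h
  exact hle hx

lemma affineIndependent_insert {s : Finset V}
    (hs : AffineIndependent ℝ ((↑) : ↥s → V))
    {p : V} (hp : p ∉ affineSpan ℝ (s : Set V)) :
    AffineIndependent ℝ ((↑) : ↥(insert p s) → V) := by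
  by_cases hps : p ∈ s
  · rw [Finset.insert_eq_self.mpr hps]; exact hs
  have hpmem : p ∈ insert p s := Finset.mem_insert_self p s
  set i : ↥(insert p s) := ⟨p, hpmem⟩ with hi
  have esub : ∀ y : {y : ↥(insert p s) // y ≠ i}, (y.1.1 : V) ∈ s := by
    intro y
    rcases Finset.mem_insert.mp y.1.2 with h | h
    · exact absurd (Subtype.ext h) y.2
    · exact h
  have einj : Function.Injective
      (fun y : {y : ↥(insert p s) // y ≠ i} => (⟨y.1.1, esub y⟩ : ↥s)) := by
    intro a b hab
    simp only [Subtype.mk.injEq] at hab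
    exact Subtype.ext (Subtype.ext hab)
  apply AffineIndependent.affineIndependent_of_notMem_span (i := i)
  · exact hs.comp_embedding ⟨_, einj⟩
  · have himg : (((↑) : ↥(insert p s) → V) '' {x | x ≠ i}) = (s : Set V) := by
      ext z
      simp only [Set.mem_image, Set.mem_setOf_eq]
      constructor
      · rintro ⟨y, hy, rfl⟩
        rcases Finset.mem_insert.mp y.2 with h | h
        · exact absurd (Subtype.ext h) hy
        · exact h
      · intro hz
        refine ⟨⟨z, Finset.mem_insert_of_mem hz⟩, ?_, rfl⟩
        intro hcontra
        have : z = p := congrArg Subtype.val hcontra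
        exact hps (this ▸ hz)
    rw [himg]
    exact hp

lemma exists_support (A' : Finset V) (hA' : affineSpan ℝ (A' : Set V) = ⊤) (v : V)
    (hv : v ∉ convexHull ℝ (A' : Set V)) :
    ∃ (f : V →ₗ[ℝ] ℝ) (c : ℝ), (∀ a ∈ A', f a ≤ c) ∧ c < f v ∧
      affineSpan ℝ (↑(insert v (A'.filter (fun a => f a = c))) : Set V) = ⊤ := by
  classical
  obtain ⟨f₀, u, hfu, huv⟩ := geometric_hahn_banach_closed_point
    (convex_convexHull ℝ _) ((A'.finite_toSet.isCompact_convexHull (𝕜 := ℝ)).isClosed) hv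
  suffices H : ∀ (N : ℕ) (f : V →ₗ[ℝ] ℝ) (c : ℝ), (∀ a ∈ A', f a ≤ c) → c < f v →
      (A'.filter (fun a => f a ≠ c)).card ≤ N →
      ∃ (g : V →ₗ[ℝ] ℝ) (c' : ℝ), (∀ a ∈ A', g a ≤ c') ∧ c' < g v ∧
        affineSpan ℝ (↑(insert v (A'.filter (fun a => g a = c'))) : Set V) = ⊤ by
    exact H (A'.filter (fun a => (f₀ : V →ₗ[ℝ] ℝ) a ≠ u)).card (f₀ : V →ₗ[ℝ] ℝ) u
      (fun a ha => (hfu a (subset_convexHull ℝ _ ha)).le) huv le_rfl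
  intro N
  induction N with
  | zero =>
    intro f c hle hlt hcard
    have hfe : A'.filter (fun a => f a ≠ c) = ∅ := Finset.card_eq_zero.mp (Nat.le_zero.mp hcard)
    have hfilter : A'.filter (fun a => f a = c) = A' := by
      apply Finset.filter_true_of_mem
      intro a ha
      by_contra hne
      have hmem : a ∈ A'.filter (fun a => f a ≠ c) := Finset.mem_filter.mpr ⟨ha, hne⟩
      rw [hfe] at hmem
      simp at hmem
    refine ⟨f, c, hle, hlt, ?_⟩
    rw [hfilter]
    apply top_unique
    rw [← hA']
    apply affineSpan_mono
    exact_mod_cast Finset.subset_insert v A'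
  | succ N ihN =>
    intro f c hle hlt hcard
    by_cases hspan : affineSpan ℝ (↑(insert v (A'.filter (fun a => f a = c))) : Set V) = ⊤
    · exact ⟨f, c, hle, hlt, hspan⟩
    set T := A'.filter (fun a => f a = c) with hT
    set S := affineSpan ℝ (↑(insert v T) : Set V) with hS
    have hvS : v ∈ S := subset_affineSpan _ _ (by simp)
    have hdir : S.direction < ⊤ := by
      rcases lt_or_eq_of_le (le_top : S.direction ≤ ⊤) with h | h
      · exact h
      · exfalso
        exact hspan ((AffineSubspace.direction_eq_top_iff_of_nonempty ⟨v, hvS⟩).mp h)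
    obtain ⟨φ, hφ0, hφmap⟩ := Submodule.exists_dual_map_eq_bot_of_lt_top hdir inferInstance
    have hφS : ∀ x ∈ S, φ x = φ v := by
      intro x hx
      have hd : x -ᵥ v ∈ S.direction := AffineSubspace.vsub_mem_direction hx hvS
      have h0 : φ (x - v) = 0 := by
        have : φ (x - v) ∈ S.direction.map φ := Submodule.mem_map_of_mem hd
        rw [hφmap] at this
        simpa using this
      rw [map_sub] at h0
      linarith
    have hTS : ∀ a ∈ T, (a : V) ∈ S := by
      intro a ha
      exact subset_affineSpan _ _ (Finset.mem_coe.mpr (Finset.mem_insert_of_mem ha))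
    have hex : ∃ a ∈ A', φ a ≠ φ v := by
      by_contra h
      push_neg at h
      have hconst : ∀ x : V, φ x = φ v := by
        intro x
        have hx : x ∈ affineSpan ℝ (A' : Set V) := by rw [hA']; trivial
        exact affineMap_eq_on_affineSpan (g := φ.toAffineMap) (c := φ v)
          (fun y hy => h y hy) hx
      have h0 : φ v = 0 := by have := hconst 0; simpa using this.symm
      exact hφ0 (LinearMap.ext fun x => by simp [hconst x, h0])
    obtain ⟨a₁, ha₁, hane⟩ := hex
    obtain ⟨ψ, hψS, a₂, ha₂, hψa⟩ :
        ∃ ψ : V →ₗ[ℝ] ℝ, (∀ x ∈ S, ψ x = ψ v) ∧ ∃ a ∈ A', ψ v < ψ a := by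
      rcases lt_or_gt_of_ne hane with h | h
      · exact ⟨-φ, fun x hx => by simp [hφS x hx], a₁, ha₁, by simpa using h⟩
      · exact ⟨φ, hφS, a₁, ha₁, h⟩
    set P := A'.filter (fun a => ψ v < ψ a) with hP
    have hPne : P.Nonempty := ⟨a₂, Finset.mem_filter.mpr ⟨ha₂, hψa⟩⟩
    have hPfc : ∀ a ∈ P, f a < c := by
      intro a ha
      obtain ⟨haA, haψ⟩ := Finset.mem_filter.mp ha
      rcases lt_or_eq_of_le (hle a haA) with h | h
      · exact h
      · exfalso
        have haT : a ∈ T := Finset.mem_filter.mpr ⟨haA, h⟩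
        exact absurd (hψS a (hTS a haT)) (ne_of_gt haψ)
    set t : ℝ := P.inf' hPne (fun a => (c - f a) / (ψ a - ψ v)) with ht
    have htpos : 0 < t := by
      rw [ht, Finset.lt_inf'_iff]
      intro a ha
      exact div_pos (sub_pos.mpr (hPfc a ha))
        (sub_pos.mpr (Finset.mem_filter.mp ha).2)
    set g : V →ₗ[ℝ] ℝ := f + t • ψ with hg
    set c' : ℝ := c + t * ψ v with hc'
    have hgval : ∀ x : V, g x = f x + t * ψ x := fun x => rfl
    have hgle : ∀ a ∈ A', g a ≤ c' := by
      intro a ha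
      rw [hgval, hc']
      by_cases hψle : ψ a ≤ ψ v
      · have := mul_le_mul_of_nonneg_left hψle htpos.le
        have h2 := hle a ha
        linarith
      · push_neg at hψle
        have haP : a ∈ P := Finset.mem_filter.mpr ⟨ha, hψle⟩
        have hinf := Finset.inf'_le (fun a => (c - f a) / (ψ a - ψ v)) haP
        rw [← ht] at hinf
        have hsub : 0 < ψ a - ψ v := sub_pos.mpr hψle
        have := (le_div_iff₀ hsub).mp hinf
        nlinarith
    have hglt : c' < g v := by
      rw [hgval, hc']
      linarith
    have hTsub : ∀ a ∈ A', f a = c → g a = c' := by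
      intro a ha hfa
      have haT : a ∈ T := Finset.mem_filter.mpr ⟨ha, hfa⟩
      rw [hgval, hc', hfa, hψS a (hTS a haT)]
    obtain ⟨astar, hastarP, hastar⟩ := Finset.exists_mem_eq_inf' hPne
      (fun a => (c - f a) / (ψ a - ψ v))
    have hastarA : astar ∈ A' := (Finset.mem_filter.mp hastarP).1
    have hastarψ : ψ v < ψ astar := (Finset.mem_filter.mp hastarP).2
    have hgstar : g astar = c' := by
      rw [hgval, hc']
      have hne : ψ astar - ψ v ≠ 0 := ne_of_gt (sub_pos.mpr hastarψ)
      have h3 : t = (c - f astar) / (ψ astar - ψ v) := by rw [ht, hastar]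
      have h4 : t * (ψ astar - ψ v) = c - f astar := (eq_div_iff hne).mp h3
      have h5 : t * ψ astar - t * ψ v = c - f astar := by rw [← mul_sub]; exact h4
      linarith [h5]
    have hsubset : A'.filter (fun a => g a ≠ c') ⊆ (A'.filter (fun a => f a ≠ c)).erase astar := by
      intro a ha
      obtain ⟨haA, hgne⟩ := Finset.mem_filter.mp ha
      refine Finset.mem_erase.mpr ⟨?_, Finset.mem_filter.mpr ⟨haA, ?_⟩⟩
      · rintro rfl
        exact hgne hgstar
      · intro hfa
        exact hgne (hTsub a haA hfa)
    have hcard' : (A'.filter (fun a => g a ≠ c')).card ≤ N := by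
      have h1 := Finset.card_le_card hsubset
      have hmem : astar ∈ A'.filter (fun a => f a ≠ c) :=
        Finset.mem_filter.mpr ⟨hastarA, ne_of_lt (hPfc astar hastarP)⟩
      have h2 := Finset.card_erase_of_mem hmem
      omega
    exact ihN g c' hgle hglt hcard'

lemma exists_extreme_rep (A : Finset V) :
    ∃ C : Finset V, C ⊆ A ∧ convexHull ℝ (C : Set V) = convexHull ℝ (A : Set V) ∧
      ∀ c ∈ C, c ∉ convexHull ℝ (↑(C.erase c) : Set V) := by
  classical
  obtain ⟨n, hn⟩ : ∃ n, A.card ≤ n := ⟨A.card, le_rfl⟩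
  induction n generalizing A with
  | zero =>
    have : A = ∅ := Finset.card_eq_zero.mp (Nat.le_zero.mp hn)
    subst this
    exact ⟨∅, subset_rfl, rfl, by simp⟩
  | succ n ih =>
    by_cases h : ∀ a ∈ A, a ∉ convexHull ℝ (↑(A.erase a) : Set V)
    · exact ⟨A, subset_rfl, rfl, h⟩
    · push_neg at h
      obtain ⟨a, haA, hamem⟩ := h
      have hcard : (A.erase a).card ≤ n := by
        rw [Finset.card_erase_of_mem haA]
        omega
      obtain ⟨C, hC1, hC2, hC3⟩ := ih (A.erase a) hcard
      refine ⟨C, hC1.trans (Finset.erase_subset _ _), ?_, hC3⟩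
      rw [hC2]
      apply Set.Subset.antisymm (convexHull_mono (by exact_mod_cast Finset.erase_subset _ _))
      apply convexHull_min _ (convex_convexHull _ _)
      intro x hx
      rcases eq_or_ne x a with rfl | hxa
      · exact hamem
      · exact subset_convexHull _ _ (by
          simp only [Finset.coe_erase, Set.mem_diff, Set.mem_singleton_iff]
          exact ⟨hx, hxa⟩)

lemma not_mem_convexHull_erase {C A : Finset V} (hCA : C ⊆ A)
    (hconv : convexHull ℝ (C : Set V) = convexHull ℝ (A : Set V)) {c : V} (hcC : c ∈ C)
    (hext : c ∉ convexHull ℝ (↑(C.erase c) : Set V)) :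
    c ∉ convexHull ℝ (↑(A.erase c) : Set V) := by
  classical
  rcases (C.erase c).eq_empty_or_nonempty with hem | hne
  · have hC : C = {c} := by
      apply Finset.eq_singleton_iff_unique_mem.mpr
      refine ⟨hcC, fun x hx => ?_⟩
      by_contra hxc
      exact absurd (Finset.mem_erase.mpr ⟨hxc, hx⟩) (by simp [hem])
    have hAc : (A : Set V) ⊆ {c} := by
      have h1 : (A : Set V) ⊆ convexHull ℝ (A : Set V) := subset_convexHull _ _
      rw [← hconv, hC] at h1
      simpa using h1
    intro hmem
    have hsub : (↑(A.erase c) : Set V) ⊆ (∅ : Set V) := by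
      intro x hx
      simp only [Finset.coe_erase, Set.mem_diff, Set.mem_singleton_iff] at hx
      exact absurd (hAc hx.1) hx.2
    rw [Set.subset_empty_iff] at hsub
    rw [hsub] at hmem
    simp at hmem
  intro hmem
  rw [Finset.convexHull_eq] at hmem
  obtain ⟨w, hw0, hw1, hwc⟩ := hmem
  rw [Finset.centerMass_eq_of_sum_1 _ _ hw1] at hwc
  simp only [id_eq] at hwc
  have hsegm : ∀ a ∈ A.erase c, ∃ α β : ℝ, ∃ y : V, 0 ≤ α ∧ 0 ≤ β ∧ α + β = 1 ∧
      y ∈ convexHull ℝ (↑(C.erase c) : Set V) ∧ α • c + β • y = a := by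
    intro a ha
    have haA : a ∈ (A : Set V) := Finset.mem_coe.mpr (Finset.mem_of_mem_erase ha)
    have hmem2 : a ∈ convexHull ℝ (C : Set V) := by
      rw [hconv]; exact subset_convexHull _ _ haA
    have hCins : (C : Set V) = insert c (↑(C.erase c) : Set V) := by
      rw [← Finset.insert_erase hcC]; simp
    rw [hCins, convexHull_insert (by exact_mod_cast hne)] at hmem2
    rw [mem_convexJoin] at hmem2
    obtain ⟨x, hx, y, hy, hseg⟩ := hmem2
    rw [Set.mem_singleton_iff] at hx
    subst hx
    rw [segment_eq_image₂] at hseg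
    obtain ⟨⟨α, β⟩, ⟨h1, h2, h3⟩, h4⟩ := hseg
    exact ⟨α, β, y, h1, h2, h3, hy, h4⟩
  choose! α β y hα hβ hαβ hy hsum using hsegm
  set B : ℝ := ∑ a ∈ A.erase c, w a * β a with hB
  have hB0 : 0 ≤ B := Finset.sum_nonneg fun a ha => mul_nonneg (hw0 a ha) (hβ a ha)
  have hkey : B • c = ∑ a ∈ A.erase c, (w a * β a) • y a := by
    have hc1 : c = (∑ a ∈ A.erase c, w a * α a) • c + ∑ a ∈ A.erase c, (w a * β a) • y a := by
      conv_lhs => rw [← hwc]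
      rw [Finset.sum_smul, ← Finset.sum_add_distrib]
      refine Finset.sum_congr rfl fun a ha => ?_
      have h := hsum a ha
      calc w a • a = w a • (α a • c + β a • y a) := by rw [h]
        _ = (w a * α a) • c + (w a * β a) • y a := by
            rw [smul_add, smul_smul, smul_smul]
    have hS1 : ∑ a ∈ A.erase c, w a * α a = 1 - B := by
      have hsplit : (∑ a ∈ A.erase c, w a * α a) + B = 1 := by
        rw [hB, ← Finset.sum_add_distrib, ← hw1]
        exact Finset.sum_congr rfl fun a ha => by rw [← mul_add, hαβ a ha, mul_one]
      linarith
    rw [hS1, sub_smul, one_smul] at hc1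
    have h4 : (c - B • c) + ∑ a ∈ A.erase c, (w a * β a) • y a = c := hc1.symm
    have h5 := eq_sub_of_add_eq' h4
    rw [sub_sub_cancel] at h5
    exact h5.symm
  by_cases hBz : B = 0
  · rw [hB] at hBz
    have hall := (Finset.sum_eq_zero_iff_of_nonneg
      (fun a ha => mul_nonneg (hw0 a ha) (hβ a ha))).mp hBz
    obtain ⟨a0, ha0, hwa0⟩ := Finset.exists_ne_zero_of_sum_ne_zero (by rw [hw1]; norm_num :
      ∑ a ∈ A.erase c, w a ≠ 0)
    have hβ0 : β a0 = 0 := by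
      have := hall a0 ha0
      rcases mul_eq_zero.mp this with h | h
      · exact absurd h hwa0
      · exact h
    have hα1 : α a0 = 1 := by have := hαβ a0 ha0; linarith [hβ0]
    have : a0 = c := by
      have := hsum a0 ha0
      rw [hβ0, hα1] at this
      simpa using this.symm
    exact absurd this (Finset.mem_erase.mp ha0).1
  · have hBpos : 0 < B := lt_of_le_of_ne hB0 (Ne.symm hBz)
    apply hext
    have hcomb : c = ∑ a ∈ A.erase c, ((w a * β a) / B) • y a := by
      have h5 : ∑ a ∈ A.erase c, ((w a * β a) / B) • y a
          = B⁻¹ • ∑ a ∈ A.erase c, (w a * β a) • y a := by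
        rw [Finset.smul_sum]
        refine Finset.sum_congr rfl fun a ha => ?_
        rw [smul_smul, div_eq_inv_mul]
      rw [h5, ← hkey, smul_smul, inv_mul_cancel₀ hBz, one_smul]
    have hfinal : (∑ a ∈ A.erase c, ((w a * β a) / B) • y a) ∈
        convexHull ℝ (↑(C.erase c) : Set V) :=
      (convex_convexHull ℝ _).sum_mem
        (fun a ha => div_nonneg (mul_nonneg (hw0 a ha) (hβ a ha)) hB0)
        (by rw [← Finset.sum_div, ← hB, div_self hBz])
        (fun a ha => hy a ha)
    rwa [← hcomb] at hfinal

lemma exists_good_vertex (A : Finset V) (hA : affineSpan ℝ (A : Set V) = ⊤)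
    (hcard : d + 2 ≤ A.card) :
    ∃ v ∈ A, affineSpan ℝ (↑(A.erase v) : Set V) = ⊤ ∧
      v ∉ convexHull ℝ (↑(A.erase v) : Set V) := by
  classical
  obtain ⟨C, hCA, hCconv, hCext⟩ := exists_extreme_rep A
  by_cases hα : ∃ c ∈ C, affineSpan ℝ (↑(A.erase c) : Set V) = ⊤
  · obtain ⟨c, hcC, hcspan⟩ := hα
    exact ⟨c, hCA hcC, hcspan, not_mem_convexHull_erase hCA hCconv hcC (hCext c hcC)⟩
  push_neg at hα
  exfalso
  have hCspan : affineSpan ℝ (C : Set V) = ⊤ := by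
    rw [← affineSpan_convexHull (C : Set V), hCconv, affineSpan_convexHull]
    exact hA
  obtain ⟨B, hBC, hBspan, hBind, hBcard⟩ := exists_basis_finset C hCspan
  have hBC' : B = C := by
    by_contra hne
    obtain ⟨c, hcC, hcB⟩ : ∃ c ∈ C, c ∉ B := by
      by_contra h
      push_neg at h
      exact hne (Finset.Subset.antisymm hBC h)
    apply hα c hcC
    apply top_unique
    rw [← hBspan]
    apply affineSpan_mono
    intro x hx
    rw [Finset.mem_coe] at hx ⊢
    exact Finset.mem_erase.mpr ⟨fun hxc => hcB (hxc ▸ hx), hCA (hBC hx)⟩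
  subst hBC'
  -- B is an affine basis contained in A; pick p ∈ A \ B
  obtain ⟨p, hpA, hpB⟩ := Finset.not_subset.mp
    (fun h : A ⊆ B => by have := Finset.card_le_card h; omega)
  let b : AffineBasis ↥B ℝ V := ⟨(↑), hBind, by
    rw [Subtype.range_coe_subtype]
    exact hBspan⟩
  have hsum := b.sum_coord_apply_eq_one p
  have hexj : ∃ j : ↥B, b.coord j p ≠ 0 := by
    by_contra h
    push_neg at h
    rw [Finset.sum_congr rfl (fun j _ => h j)] at hsum
    simp at hsum
  obtain ⟨j, hj⟩ := hexj
  have hpnot : p ∉ affineSpan ℝ (↑(B.erase ↑j) : Set V) := by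
    intro hmem
    apply hj
    refine affineMap_eq_on_affineSpan (g := b.coord j) (c := 0) ?_ hmem
    intro y hy
    obtain ⟨hyne, hyB⟩ := Finset.mem_erase.mp (Finset.mem_coe.mp hy)
    have h2 : b.coord j (b ⟨y, hyB⟩) = 0 := by
      rw [b.coord_apply, if_neg]
      intro hcontra
      exact hyne (by rw [hcontra])
    exact h2
  have hins := affineIndependent_insert
    (hBind.mono (by exact_mod_cast Finset.erase_subset _ _ : (↑(B.erase ↑j) : Set V) ⊆ ↑B))
    hpnot
  have hcardins : (insert p (B.erase ↑j)).card = d + 1 := by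
    rw [Finset.card_insert_of_notMem (fun h => hpB (Finset.mem_of_mem_erase h)),
      Finset.card_erase_of_mem j.2, hBcard]
    omega
  have hspanins : affineSpan ℝ (↑(insert p (B.erase ↑j)) : Set V) = ⊤ := by
    have := hins.affineSpan_eq_top_iff_card_eq_finrank_add_one.mpr (by
      rw [Fintype.card_coe, hcardins, Module.finrank_fintype_fun_eq_card, Fintype.card_fin])
    rw [Subtype.range_coe_subtype] at this
    exact this
  apply hα ↑j j.2
  apply top_unique
  rw [← hspanins]
  apply affineSpan_mono
  intro x hx
  rw [Finset.mem_coe] at hx ⊢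
  rcases Finset.mem_insert.mp hx with rfl | hxB
  · exact Finset.mem_erase.mpr ⟨fun h => hpB (h ▸ j.2), hpA⟩
  · obtain ⟨hxne, hxB'⟩ := Finset.mem_erase.mp hxB
    exact Finset.mem_erase.mpr ⟨hxne, hCA hxB'⟩

/-- transfer of affine independence from a Finset to a `Fin`-indexed family -/
lemma affineIndependent_family {W : Finset V} (hW : AffineIndependent ℝ ((↑) : ↥W → V))
    {n : ℕ} (e : Fin n → ↥W) (he : Function.Injective e) :
    AffineIndependent ℝ (fun i => ((e i : ↥W) : V)) :=
  hW.comp_embedding ⟨e, he⟩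

lemma card_kfold_base {A : Finset V}
    (hA : AffineIndependent ℝ ((↑) : ↥A → V)) (hcard : A.card = d + 1) (k : ℕ) :
    (d + k).choose k ≤ (kfold k A).card := by
  classical
  have e : Fin (d + 1) ≃ ↥A := (finCongr hcard.symm).trans A.equivFin.symm
  set g : Fin (d + 1) → V := fun i => ((e i : ↥A) : V) with hg
  have hgind : AffineIndependent ℝ g := affineIndependent_family hA e e.injective
  have hgmem : ∀ i, g i ∈ A := fun i => (e i).2
  set F : Sym (Fin (d + 1)) k → ↥(kfold k A) :=
    fun μ => ⟨(μ.1.map g).sum, mem_kfold.mpr ⟨μ.1.map g, by simp [μ.2], by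
      intro a ha
      obtain ⟨i, _, rfl⟩ := Multiset.mem_map.mp ha
      exact hgmem i, rfl⟩⟩ with hF
  have hFinj : Function.Injective F := by
    intro μ ν hμν
    have hsum : (μ.1.map g).sum = (ν.1.map g).sum := congrArg Subtype.val hμν
    exact Subtype.ext (multiset_sum_inj hgind μ.1 ν.1 μ.2 ν.2 hsum)
  have hle := Fintype.card_le_of_injective F hFinj
  rw [Sym.card_sym_eq_choose, Fintype.card_coe, Fintype.card_fin] at hle
  have : d + 1 + k - 1 = d + k := by omega
  rwa [this] at hle

lemma card_kfold_step (K : ℕ) {A : Finset V} {v : V} (hvA : v ∈ A)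
    (hspan' : affineSpan ℝ (↑(A.erase v) : Set V) = ⊤)
    (hv : v ∉ convexHull ℝ (↑(A.erase v) : Set V)) :
    (kfold (K + 1) (A.erase v)).card + (d + K).choose K ≤ (kfold (K + 1) A).card := by
  classical
  set A' := A.erase v with hA'
  obtain ⟨f, c, hle, hlt, hspanT⟩ := exists_support A' hspan' v hv
  set T := A'.filter (fun a => f a = c) with hT
  obtain ⟨U, hUsub, hUspan, hUind, hUcard⟩ := exists_basis_finset _ hspanT
  have hfvne : f v ≠ c := by
    intro hx
    rw [hx] at hlt
    exact lt_irrefl c hlt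
  have hvT : v ∉ T := fun h => hfvne (Finset.mem_filter.mp h).2
  have hUev : U.erase v ⊆ T := by
    intro x hx
    obtain ⟨hxv, hxU⟩ := Finset.mem_erase.mp hx
    rcases Finset.mem_insert.mp (hUsub hxU) with h | h
    · exact absurd h hxv
    · exact h
  have hcardUe : d ≤ (U.erase v).card := by
    by_cases hvU : v ∈ U
    · rw [Finset.card_erase_of_mem hvU, hUcard]; omega
    · rw [Finset.erase_eq_of_notMem hvU, hUcard]; omega
  obtain ⟨G, hGsub, hGcard⟩ := Finset.exists_subset_card_eq hcardUe
  have hGT : G ⊆ T := hGsub.trans hUev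
  have hGU : G ⊆ U := hGsub.trans (Finset.erase_subset _ _)
  have hGind : AffineIndependent ℝ ((↑) : ↥G → V) :=
    hUind.mono (by exact_mod_cast hGU : (↑G : Set V) ⊆ ↑U)
  have hfG : ∀ x ∈ G, f x = c := fun x hx => (Finset.mem_filter.mp (hGT hx)).2
  have hGA' : G ⊆ A' := fun x hx => (Finset.mem_filter.mp (hGT hx)).1
  have hvG : v ∉ affineSpan ℝ (↑G : Set V) := by
    intro hmem
    exact hfvne (affineMap_eq_on_affineSpan (g := f.toAffineMap) (c := c)
      (fun y hy => hfG y hy) hmem)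
  have hvGn : v ∉ G := fun h => hvT (hGT h)
  have hins := affineIndependent_insert hGind hvG
  -- build the Fin-indexed family
  have eG : Fin d ≃ ↥G := (finCongr hGcard.symm).trans G.equivFin.symm
  set g0 : Fin d → V := fun i => ((eG i : ↥G) : V) with hg0
  have hg0mem : ∀ i, g0 i ∈ G := fun i => (eG i).2
  set h : Fin (d + 1) → V := Fin.cons v g0 with hh
  set e : Fin (d + 1) → ↥(insert v G) :=
    Fin.cons ⟨v, Finset.mem_insert_self v G⟩
      (fun i => ⟨g0 i, Finset.mem_insert_of_mem (hg0mem i)⟩) with he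
  have hval : ∀ i, ((e i : ↥(insert v G)) : V) = h i := by
    intro i
    induction i using Fin.cases with
    | zero => simp [he, hh]
    | succ j => simp [he, hh]
  have hhinj : Function.Injective h := by
    intro a b hab
    induction a using Fin.cases with
    | zero =>
      induction b using Fin.cases with
      | zero => rfl
      | succ j =>
        rw [hh] at hab
        simp only [Fin.cons_zero, Fin.cons_succ] at hab
        exact absurd (hab ▸ hg0mem j) hvGn
    | succ i =>
      induction b using Fin.cases with
      | zero =>
        rw [hh] at hab
        simp only [Fin.cons_zero, Fin.cons_succ] at hab
        exact absurd (hab ▸ hg0mem i) hvGn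
      | succ j =>
        rw [hh] at hab
        simp only [Fin.cons_succ] at hab
        have h2 : eG i = eG j := Subtype.ext hab
        exact congrArg Fin.succ (eG.injective h2)
  have heinj : Function.Injective e := by
    intro a b hab
    apply hhinj
    rw [← hval a, ← hval b, hab]
  have hind : AffineIndependent ℝ h := by
    have h2 := affineIndependent_family hins e heinj
    convert h2 using 1
    funext i
    rw [hval i]
  have hhmem : ∀ i, h i ∈ A := by
    intro i
    induction i using Fin.cases with
    | zero => exact hvA
    | succ j =>
      have : g0 j ∈ A' := hGA' (hg0mem j)
      exact Finset.mem_of_mem_erase this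
  have hfh : ∀ i, c ≤ f (h i) := by
    intro i
    induction i using Fin.cases with
    | zero => exact le_of_lt hlt
    | succ j => exact le_of_eq (hfG _ (hg0mem j)).symm
  -- the witness set
  set Wit : Finset V :=
    Finset.image (fun μ : Sym (Fin (d + 1)) K => v + (μ.1.map h).sum) Finset.univ with hWit
  have hmapinj : Function.Injective (fun μ : Sym (Fin (d + 1)) K => v + (μ.1.map h).sum) := by
    intro μ ν hvv
    simp only [add_right_inj] at hvv
    exact Subtype.ext (multiset_sum_inj hind μ.1 ν.1 μ.2 ν.2 hvv)
  have hWitcard : Wit.card = (d + K).choose K := by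
    rw [hWit, Finset.card_image_of_injective _ hmapinj, Finset.card_univ,
      Sym.card_sym_eq_choose, Fintype.card_fin,
      show d + 1 + K - 1 = d + K by omega]
  have hWitsub : Wit ⊆ kfold (K + 1) A := by
    intro x hx
    obtain ⟨μ, _, rfl⟩ := Finset.mem_image.mp hx
    refine mem_kfold.mpr ⟨v ::ₘ μ.1.map h, by simp [μ.2], ?_, by simp⟩
    intro a ha
    rcases Multiset.mem_cons.mp ha with rfl | ha'
    · exact hvA
    · obtain ⟨i, _, rfl⟩ := Multiset.mem_map.mp ha'
      exact hhmem i
  have hflow : ∀ x ∈ Wit, ((K : ℝ) + 1) * c < f x := by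
    intro x hx
    obtain ⟨μ, _, rfl⟩ := Finset.mem_image.mp hx
    have hsum : (K : ℝ) * c ≤ ((μ.1.map h).map f).sum := by
      have hcard2 : Multiset.card ((μ.1.map h).map f) = K := by simp [μ.2]
      have := Multiset.card_nsmul_le_sum (s := (μ.1.map h).map f) (a := c) (by
        intro b hb
        obtain ⟨y, hy, rfl⟩ := Multiset.mem_map.mp hb
        obtain ⟨i, _, rfl⟩ := Multiset.mem_map.mp hy
        exact hfh i)
      rw [hcard2, nsmul_eq_mul] at this
      exact this
    have hfx : f (v + (μ.1.map h).sum) = f v + ((μ.1.map h).map f).sum := by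
      rw [map_add, map_multiset_sum]
    rw [hfx]
    have : (K : ℝ) * c ≤ ((μ.1.map h).map f).sum := hsum
    nlinarith [hlt]
  have hfhigh : ∀ y ∈ kfold (K + 1) A', f y ≤ ((K : ℝ) + 1) * c := by
    intro y hy
    obtain ⟨m, hmcard, hmmem, rfl⟩ := mem_kfold.mp hy
    have : f m.sum = (m.map f).sum := map_multiset_sum f m
    rw [this]
    have h2 := Multiset.sum_le_card_nsmul (m.map f) c (by
      intro b hb
      obtain ⟨a, ha, rfl⟩ := Multiset.mem_map.mp hb
      exact hle a (hmmem a ha))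
    rw [Multiset.card_map, hmcard, nsmul_eq_mul] at h2
    push_cast at h2
    linarith
  have hdisj : Disjoint (kfold (K + 1) A') Wit := by
    rw [Finset.disjoint_right]
    intro x hxW hxk
    have h1 := hflow x hxW
    have h2 := hfhigh x hxk
    linarith
  have hunion : kfold (K + 1) A' ∪ Wit ⊆ kfold (K + 1) A :=
    Finset.union_subset (kfold_mono (Finset.erase_subset _ _)) hWitsub
  calc (kfold (K + 1) A').card + (d + K).choose K
      = (kfold (K + 1) A' ∪ Wit).card := by
        rw [Finset.card_union_of_disjoint hdisj, hWitcard]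
    _ ≤ (kfold (K + 1) A).card := Finset.card_le_card hunion

end FMRgeom

/-- Freiman–Matolcsi–Ruzsa: if `A` is finite `d`-dimensional in `ℝ^d`, then for
every `k ≥ 1`, `|kA| ≥ C(d+k-1,k-1)|A| - (k-1)C(d+k-1,k)`. -/
theorem stmt_2 (d : ℕ) (A : Finset (Fin d → ℝ))
    (hA : affineSpan ℝ (A : Set (Fin d → ℝ)) = ⊤)
    (k : ℕ) (hk : 1 ≤ k) :
    ((kfold k A).card : ℤ) ≥
      (d + k - 1).choose (k - 1) * A.card - ((k : ℤ) - 1) * (d + k - 1).choose k := by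
  obtain ⟨K, rfl⟩ : ∃ K, k = K + 1 := ⟨k - 1, (Nat.succ_pred_eq_of_pos hk).symm⟩
  have e1 : d + (K + 1) - 1 = d + K := by omega
  have e2 : K + 1 - 1 = K := by omega
  rw [e1, e2]
  -- identity facts
  have hch : ((d + K).choose (K + 1)) * (K + 1) = (d + K).choose K * d := by
    rw [Nat.choose_succ_right_eq]; congr 1; omega
  have hpascal : (d + K + 1).choose (K + 1) = (d + K).choose K + (d + K).choose (K + 1) :=
    Nat.choose_succ_succ _ _
  suffices H : ∀ (n : ℕ) (A : Finset (Fin d → ℝ)), A.card ≤ n →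
      affineSpan ℝ (A : Set (Fin d → ℝ)) = ⊤ →
      ((kfold (K + 1) A).card : ℤ) ≥
        (d + K).choose K * A.card - ((K + 1 : ℕ) - 1 : ℤ) * (d + K).choose (K + 1) by
    have := H A.card A le_rfl hA
    push_cast at this ⊢
    linarith
  intro n
  induction n with
  | zero =>
    intro A hcard hspan
    interval_cases hA' : A.card
    · exfalso
      rw [Finset.card_eq_zero] at hA'
      subst hA'
      simp only [Finset.coe_empty, AffineSubspace.span_empty] at hspan
      have : (0 : Fin d → ℝ) ∈ (⊥ : AffineSubspace ℝ (Fin d → ℝ)) := by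
        rw [hspan]; trivial
      exact AffineSubspace.notMem_bot (k := ℝ) (V := Fin d → ℝ) _ this
  | succ n ih =>
    intro A hcard hspan
    obtain ⟨B, hBA, hBspan, hBind, hBcard⟩ := exists_basis_finset A hspan
    have hd1 : d + 1 ≤ A.card := hBcard ▸ Finset.card_le_card hBA
    by_cases hbase : A.card = d + 1
    · have hAB : B = A := Finset.eq_of_subset_of_card_le hBA (by omega)
      subst hAB
      have hbc := card_kfold_base hBind hBcard (K + 1)
      have : ((d + K + 1).choose (K + 1) : ℤ) ≤ (kfold (K + 1) B).card := by
        have : d + (K + 1) = d + K + 1 := by omega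
        rw [this] at hbc; exact_mod_cast hbc
    -- arithmetic: RHS = pascal value
      rw [hbase]
      push_cast [hpascal] at this ⊢
      have hchz : ((d + K).choose (K + 1) : ℤ) * (K + 1) = (d + K).choose K * d := by
        exact_mod_cast hch
      push_cast at hchz
      nlinarith [this, hchz]
    · have h2 : d + 2 ≤ A.card := by omega
      obtain ⟨v, hvA, hspan', hvconv⟩ := exists_good_vertex A hspan h2
      have hstep := card_kfold_step K hvA hspan' hvconv
      have hcard' : (A.erase v).card = A.card - 1 := Finset.card_erase_of_mem hvA
      have hih := ih (A.erase v) (by omega) hspan'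
      rw [hcard'] at hih
      have hc1 : (1:ℕ) ≤ A.card := by omega
      have hcast : ((A.card - 1 : ℕ) : ℤ) = (A.card : ℤ) - 1 := by
        push_cast [hc1]; ring
      rw [hcast] at hih
      have hstepz : ((kfold (K + 1) (A.erase v)).card : ℤ) + (d + K).choose K ≤
          (kfold (K + 1) A).card := by exact_mod_cast hstep
      push_cast at hih ⊢
      linarith
end

section
/- Let C = {v₀, ..., v_d} be an affinely independent set in ℝ^d spanning a d-simplex S = conv(C), let k ≥ 1, and let a, b be distinct points of S. If (a + kC) ∩ (b + kC) ≠ ∅, then both a ∈ C and b ∈ C. -/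
open Finset Pointwise

lemma kfold_mem_rep {d : ℕ} (v : Fin (d + 1) → (Fin d → ℝ)) :
    ∀ k : ℕ, ∀ x ∈ kfold k (Finset.image v Finset.univ),
      ∃ m : Fin (d + 1) → ℕ, (∑ i, m i) = k ∧ x = ∑ i, (m i : ℝ) • v i := by
  intro k
  induction k with
  | zero =>
    intro x hx
    simp [kfold] at hx
    exact ⟨0, by simp, by simp [hx]⟩
  | succ n ih =>
    intro x hx
    rw [show kfold (n + 1) (Finset.image v Finset.univ)
        = kfold n (Finset.image v Finset.univ) + (Finset.image v Finset.univ) from rfl,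
      Finset.mem_add] at hx
    obtain ⟨y, hy, c, hc, rfl⟩ := hx
    obtain ⟨m, hm, rfl⟩ := ih y hy
    obtain ⟨i0, -, rfl⟩ := Finset.mem_image.1 hc
    refine ⟨fun i => m i + if i = i0 then 1 else 0, ?_, ?_⟩
    · simp [Finset.sum_add_distrib, hm]
    · have : ∀ i, ((m i + if i = i0 then 1 else 0 : ℕ) : ℝ) • v i
          = (m i : ℝ) • v i + (if i = i0 then (1 : ℝ) else 0) • v i := by
        intro i
        rcases eq_or_ne i i0 with h | h <;> simp [h, add_smul]
      simp only [this, Finset.sum_add_distrib]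
      congr 1
      simp [Finset.sum_ite_eq']

lemma exists_weights {d : ℕ} (v : Fin (d + 1) → (Fin d → ℝ)) (a : Fin d → ℝ)
    (ha : a ∈ convexHull ℝ (Set.range v)) :
    ∃ w : Fin (d + 1) → ℝ, (∀ i, 0 ≤ w i) ∧ ∑ i, w i = 1 ∧ a = ∑ i, w i • v i := by
  rw [convexHull_range_eq_exists_affineCombination] at ha
  obtain ⟨s, w, h0, h1, rfl⟩ := ha
  refine ⟨fun i => if i ∈ s then w i else 0, ?_, ?_, ?_⟩
  · intro i; dsimp only; split
    · exact h0 i ‹_›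
    · exact le_refl 0
  · dsimp only; rw [Finset.sum_ite_mem, Finset.univ_inter, h1]
  · rw [Finset.affineCombination_eq_linear_combination s v w h1]
    simp only [ite_smul, zero_smul]
    rw [Finset.sum_ite_mem, Finset.univ_inter]

/-- If the `i`-th weight is `1`, the convex combination is the `i`-th vertex. -/
lemma weight_one_eq {d : ℕ} (v : Fin (d + 1) → (Fin d → ℝ)) (w : Fin (d + 1) → ℝ)
    (h0 : ∀ i, 0 ≤ w i) (h1 : ∑ i, w i = 1) (i : Fin (d + 1)) (hi : w i = 1) :
    ∑ j, w j • v j = v i := by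
  have hz : ∀ j, j ≠ i → w j = 0 := by
    intro j hj
    have hsum : ∑ j ∈ Finset.univ.erase i, w j = 0 := by
      have := Finset.add_sum_erase Finset.univ w (Finset.mem_univ i)
      rw [h1, hi] at this
      linarith
    exact (Finset.sum_eq_zero_iff_of_nonneg (fun j _ => h0 j)).1 hsum j
      (Finset.mem_erase.2 ⟨hj, Finset.mem_univ j⟩)
  rw [← Finset.add_sum_erase Finset.univ _ (Finset.mem_univ i), hi, one_smul]
  rw [Finset.sum_eq_zero fun j hj => by rw [hz j (Finset.mem_erase.1 hj).1, zero_smul]]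
  simp

/-- If `a ≠ b` are points of the simplex `S = conv C` with
`(a + kC) ∩ (b + kC) ≠ ∅`, then both `a` and `b` are vertices of `S`. -/
theorem stmt_4 (d k : ℕ) (hk : 1 ≤ k) (v : Fin (d + 1) → (Fin d → ℝ))
    (hv : AffineIndependent ℝ v) (a b : Fin d → ℝ)
    (ha : a ∈ convexHull ℝ (Set.range v))
    (hb : b ∈ convexHull ℝ (Set.range v))
    (hab : a ≠ b)
    (h : ((({a} : Finset (Fin d → ℝ)) + kfold k (Finset.image v Finset.univ)) ∩
          (({b} : Finset (Fin d → ℝ)) + kfold k (Finset.image v Finset.univ))).Nonempty) :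
    a ∈ Set.range v ∧ b ∈ Set.range v := by
  obtain ⟨α, hα0, hα1, hA⟩ := exists_weights v a ha
  obtain ⟨β, hβ0, hβ1, hB⟩ := exists_weights v b hb
  obtain ⟨z, hz⟩ := h
  rw [Finset.mem_inter, Finset.mem_add, Finset.mem_add] at *
  obtain ⟨⟨a', ha', x, hx, hax⟩, ⟨b', hb', y, hy, hby⟩⟩ := hz
  rw [Finset.mem_singleton] at ha' hb'
  subst ha' hb'
  obtain ⟨m, hm, rfl⟩ := kfold_mem_rep v k x hx
  obtain ⟨n, hn, rfl⟩ := kfold_mem_rep v k y hy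
  -- a + Σ m v = b + Σ n v
  have key : ∑ i, (α i + (m i : ℝ)) • v i = ∑ i, (β i + (n i : ℝ)) • v i := by
    simp only [add_smul, Finset.sum_add_distrib, ← hA, ← hB]
    rw [hax, hby]
  have hsum : ∑ i, (α i + (m i : ℝ)) = ∑ i, (β i + (n i : ℝ)) := by
    simp only [Finset.sum_add_distrib, hα1, hβ1]
    norm_num
    rw [← Nat.cast_sum, ← Nat.cast_sum, hm, hn]
  have heq : ∀ i, α i + (m i : ℝ) = β i + (n i : ℝ) := fun i =>
    hv.eq_of_sum_eq_sum hsum key i (Finset.mem_univ i)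
  -- bounds: each weight is ≤ 1
  have hle : ∀ (w : Fin (d + 1) → ℝ), (∀ i, 0 ≤ w i) → (∑ i, w i = 1) → ∀ i, w i ≤ 1 := by
    intro w h0 h1 i
    rw [← h1]
    exact Finset.single_le_sum (fun j _ => h0 j) (Finset.mem_univ i)
  -- integer differences
  set δ : Fin (d + 1) → ℤ := fun i => (n i : ℤ) - m i with hδ
  have hδR : ∀ i, (δ i : ℝ) = α i - β i := by
    intro i
    have := heq i
    push_cast [hδ]
    linarith
  have hδsum : ∑ i, δ i = 0 := by
    simp only [hδ, Finset.sum_sub_distrib, ← Nat.cast_sum, hm, hn, sub_self]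
  have hδbd : ∀ i, δ i ≤ 1 ∧ -1 ≤ δ i := by
    intro i
    constructor <;> [rw [← @Int.cast_le ℝ]; rw [← @Int.cast_le ℝ]] <;>
      rw [hδR i] <;> push_cast <;>
      [linarith [hβ0 i, hle α hα0 hα1 i]; linarith [hα0 i, hle β hβ0 hβ1 i]]
  have hne : ∃ i, δ i ≠ 0 := by
    by_contra hc
    push_neg at hc
    apply hab
    rw [hA, hB]
    refine Finset.sum_congr rfl fun i _ => ?_
    have : (δ i : ℝ) = 0 := by rw [hc i]; simp
    rw [hδR i] at this
    rw [show α i = β i by linarith]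
  obtain ⟨i0, hi0⟩ := hne
  -- there must be an index with δ = 1 and one with δ = -1
  have hpos : ∃ i, δ i = 1 := by
    by_contra hc
    push_neg at hc
    have hnonpos : ∀ i, δ i ≤ 0 := fun i => by
      have := (hδbd i).1; have := hc i; omega
    have : δ i0 = 0 :=
      (Finset.sum_eq_zero_iff_of_nonpos (fun j _ => hnonpos j)).1 hδsum i0 (Finset.mem_univ i0)
    exact hi0 this
  have hneg : ∃ i, δ i = -1 := by
    by_contra hc
    push_neg at hc
    have hnonneg : ∀ i, 0 ≤ δ i := fun i => by
      have := (hδbd i).2; have := hc i; omega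
    have : δ i0 = 0 :=
      (Finset.sum_eq_zero_iff_of_nonneg (fun j _ => hnonneg j)).1 hδsum i0 (Finset.mem_univ i0)
    exact hi0 this
  obtain ⟨j, hj⟩ := hneg
  obtain ⟨i, hi⟩ := hpos
  constructor
  · refine ⟨i, ?_⟩
    have h1 : α i = 1 := by
      have := hδR i
      rw [hi] at this
      push_cast at this
      have := hβ0 i
      have := hle α hα0 hα1 i
      linarith
    rw [hA]
    exact (weight_one_eq v α hα0 hα1 i h1).symm
  · refine ⟨j, ?_⟩
    have h1 : β j = 1 := by
      have := hδR j
      rw [hj] at this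
      push_cast at this
      have := hα0 j
      have := hle β hβ0 hβ1 j
      linarith
    rw [hB]
    exact (weight_one_eq v β hβ0 hβ1 j h1).symm
end

section
/- Let C = {v₀, ..., v_d} be the vertex set of a d-simplex in ℝ^d, k ≥ 1, and A a finite subset of conv(C). Then |A + kC| = C(d+k, k)·|A| - Σ_{i=1}^{|A ∩ C|} ( C(d+k, k) - C(d+k+1-i, k) ). -/
open Finset Pointwise

lemma card_piAntidiag' {ι : Type*} [Fintype ι] [DecidableEq ι] (s : Finset ι) (n : ℕ) :
    (s.piAntidiag n).card = (s.card + n - 1).choose n := by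
  classical
  have h1 : ((univ : Finset {x // x ∈ s}).piAntidiag n).card = (s.card + n - 1).choose n := by
    rw [← Finset.map_sym_eq_piAntidiag, card_map, sym_univ, card_univ,
      Sym.card_sym_eq_multichoose, Nat.multichoose_eq, Fintype.card_coe]
  rw [← h1]
  let g : ({x // x ∈ s} → ℕ) → (ι → ℕ) := fun f i => if h : i ∈ s then f ⟨i, h⟩ else 0
  have himg : s.piAntidiag n = ((univ : Finset {x // x ∈ s}).piAntidiag n).image g := by
    ext f
    simp only [mem_image, mem_piAntidiag, ne_eq]
    constructor
    · rintro ⟨hsum, hsupp⟩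
      refine ⟨fun x => f x.1, ⟨?_, by simp⟩, ?_⟩
      · rw [← hsum]
        exact (Finset.sum_subtype s (fun _ => Iff.rfl) f).symm
      · funext i
        by_cases h : i ∈ s
        · simp [g, h]
        · simp only [g, dif_neg h]
          by_contra h'
          exact h (hsupp i (Ne.symm h'))
    · rintro ⟨f', ⟨hsum, -⟩, rfl⟩
      constructor
      · rw [← hsum, Finset.sum_subtype s (fun _ => Iff.rfl) (g f')]
        exact Finset.sum_congr rfl fun x _ => by simp [g]
      · intro i hi
        by_contra h
        simp [g, dif_neg h] at hi
  rw [himg]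
  apply Finset.card_image_of_injOn
  intro f hf f' hf' hff
  funext x
  have := congrFun hff x.1
  simpa [g, x.2] using this

lemma aux_card_pair {α β γ : Type*} [DecidableEq β] [DecidableEq γ] (s : Finset α)
    (f' : α → β) (g' : α → γ) (h' : ∀ p ∈ s, ∀ q ∈ s, f' p = f' q → g' p = g' q) :
    (s.image (fun p => (f' p, g' p))).card = (s.image f').card := by
  have heq : s.image f' = (s.image fun p => (f' p, g' p)).image Prod.fst := by
    rw [image_image]; rfl
  rw [heq]
  refine (Finset.card_image_of_injOn ?_).symm
  rintro x hx y hy hxy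
  simp only [coe_image, Set.mem_image, mem_coe] at hx hy
  obtain ⟨p, hp, rfl⟩ := hx
  obtain ⟨q, hq, rfl⟩ := hy
  simp only at hxy
  exact Prod.ext hxy (h' p hp q hq hxy)

lemma aux_card_image {α β γ : Type*} [DecidableEq β] [DecidableEq γ] (s : Finset α)
    (f : α → β) (g : α → γ) (h : ∀ p ∈ s, ∀ q ∈ s, f p = f q ↔ g p = g q) :
    (s.image f).card = (s.image g).card := by
  classical
  have h1 := aux_card_pair s f g (fun p hp q hq => (h p hp q hq).1)
  have h2 := aux_card_pair s g f (fun p hp q hq => (h p hp q hq).2)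
  have h3 : (s.image fun p => (f p, g p)).card = (s.image fun p => (g p, f p)).card := by
    apply Finset.card_bij (fun x _ => (x.2, x.1))
    · rintro ⟨x1, x2⟩ hx
      simp only [mem_image] at hx ⊢
      obtain ⟨p, hp, hpx⟩ := hx
      exact ⟨p, hp, by cases hpx; rfl⟩
    · rintro ⟨x1, x2⟩ _ ⟨y1, y2⟩ _ hxy
      simpa [Prod.ext_iff, and_comm] using hxy
    · rintro ⟨x1, x2⟩ hx
      simp only [mem_image] at hx
      obtain ⟨p, hp, hpx⟩ := hx
      exact ⟨(x2, x1), by simp only [mem_image]; exact ⟨p, hp, by cases hpx; rfl⟩, rfl⟩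
  omega

lemma kfold_image_eq {ι E : Type*} [Fintype ι] [DecidableEq ι] [DecidableEq E]
    [AddCommMonoid E] (v : ι → E) (n : ℕ) :
    kfold n (Finset.image v Finset.univ) =
      (Finset.piAntidiag (univ : Finset ι) n).image (fun c : ι → ℕ => ∑ i, c i • v i) := by
  classical
  induction n with
  | zero =>
      show ({0} : Finset E) = _
      rw [Finset.piAntidiag_zero]
      simp
  | succ n ih =>
      show kfold n _ + _ = _
      rw [ih]
      ext x
      rw [Finset.mem_add, Finset.mem_image]
      constructor
      · rintro ⟨y, hy, z, hz, rfl⟩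
        rw [Finset.mem_image] at hy hz
        obtain ⟨c, hcmem, rfl⟩ := hy
        obtain ⟨j, -, rfl⟩ := hz
        rw [Finset.mem_piAntidiag] at hcmem
        obtain ⟨hc, -⟩ := hcmem
        refine ⟨c + Pi.single j 1, Finset.mem_piAntidiag.2 ⟨?_, fun i _ => mem_univ i⟩, ?_⟩
        · simp [Finset.sum_add_distrib, hc, Finset.sum_pi_single]
        · simp only [Pi.add_apply, add_smul]
          rw [Finset.sum_add_distrib]
          congr 1
          rw [Finset.sum_eq_single j]
          · simp
          · intro i _ hij; simp [Pi.single_eq_of_ne hij]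
          · simp
      · rintro ⟨c, hcmem, rfl⟩
        rw [Finset.mem_piAntidiag] at hcmem
        obtain ⟨hc, -⟩ := hcmem
        have hne : ∃ j, c j ≠ 0 := by
          by_contra h
          push_neg at h
          simp [h] at hc
        obtain ⟨j, hj⟩ := hne
        set c' := Function.update c j (c j - 1) with hc'
        have hdec : c = fun i => c' i + (Pi.single j 1 : ι → ℕ) i := by
          funext i
          by_cases hij : i = j
          · subst hij
            simp only [c', Function.update_self, Pi.single_eq_same]
            omega
          · simp [c', Function.update_of_ne hij, Pi.single_eq_of_ne hij]
        refine ⟨∑ i, c' i • v i, ?_, v j, ?_, ?_⟩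
        · rw [Finset.mem_image]
          refine ⟨c', Finset.mem_piAntidiag.2 ⟨?_, fun i _ => mem_univ i⟩, rfl⟩
          show ∑ i, c' i = n
          have hc2 : ∑ i, c i = n + 1 := hc
          have : ∑ i, c i = (∑ i, c' i) + 1 := by
            rw [hdec, Finset.sum_add_distrib]
            simp [Finset.sum_pi_single]
          omega
        · exact mem_image_of_mem v (mem_univ j)
        · conv_rhs => rw [hdec]
          simp only [add_smul]
          rw [Finset.sum_add_distrib]
          congr 1
          rw [Finset.sum_eq_single j]
          · simp
          · intro i _ hij; simp [Pi.single_eq_of_ne hij]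
          · simp

lemma hockey (d k : ℕ) : ∀ m, m ≤ d + 1 →
    ∑ i ∈ Finset.Icc 1 m, ((d + k + 1 - i).choose k : ℤ) =
      ((d + k + 1).choose (k + 1) : ℤ) - ((d + k + 1 - m).choose (k + 1) : ℤ) := by
  intro m
  induction m with
  | zero => simp
  | succ m ih =>
      intro hm
      rw [Finset.sum_Icc_succ_top (by omega : 1 ≤ m + 1), ih (by omega)]
      have h1 : d + k + 1 - (m + 1) = d + k - m := by omega
      have h2 : d + k + 1 - m = (d + k - m) + 1 := by omega
      rw [h1, h2, Nat.choose_succ_succ (d + k - m) k]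
      push_cast
      ring

/-- If `C` is the vertex set of a `d`-simplex and `A ⊆ conv C`, then
`|A + kC| = C(d+k,k)|A| - Σ_{i=1}^{|A∩C|} (C(d+k,k) - C(d+k+1-i,k))`. -/
theorem stmt_6 (d k : ℕ) (hk : 1 ≤ k) (v : Fin (d + 1) → (Fin d → ℝ))
    (hv : AffineIndependent ℝ v) (A : Finset (Fin d → ℝ))
    (hA : (A : Set (Fin d → ℝ)) ⊆ convexHull ℝ (Set.range v)) :
    ((A + kfold k (Finset.image v Finset.univ)).card : ℤ) =
      (d + k).choose k * A.card -
        ∑ i ∈ Finset.Icc 1 (A ∩ Finset.image v Finset.univ).card,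
          (((d + k).choose k : ℤ) - (d + k + 1 - i).choose k) := by
  classical
  have hinj : Function.Injective v := hv.injective
  set C : Finset (Fin d → ℝ) := Finset.image v Finset.univ with hC
  -- barycentric weights
  have hwA : ∀ a ∈ A, ∃ α : Fin (d + 1) → ℝ,
      (∀ i, 0 ≤ α i) ∧ ∑ i, α i = 1 ∧ ∑ i, α i • v i = a := by
    intro a ha
    have h1 : a ∈ convexHull ℝ (↑C : Set (Fin d → ℝ)) := by
      rw [hC, coe_image, coe_univ, Set.image_univ]
      exact hA ha
    rw [Finset.convexHull_eq] at h1
    obtain ⟨w, hw0, hw1, hwc⟩ := h1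
    refine ⟨fun i => w (v i), fun i => hw0 _ (by rw [hC]; exact mem_image_of_mem v (mem_univ i)),
      ?_, ?_⟩
    · rw [← hw1, hC, Finset.sum_image (fun x _ y _ h => hinj h)]
    · rw [← hwc, Finset.centerMass_eq_of_sum_1 _ id hw1, hC,
        Finset.sum_image (fun x _ y _ h => hinj h)]
      rfl
  choose! α hα0 hα1 hα2 using hwA
  have hαle : ∀ a ∈ A, ∀ i, α a i ≤ 1 := by
    intro a ha i
    have h := Finset.single_le_sum (f := α a) (fun j _ => hα0 a ha j) (mem_univ i)
    rw [hα1 a ha] at h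
    exact h
  have hvert : ∀ a ∈ A, ∀ i, α a i = 1 → a = v i := by
    intro a ha i h1
    have herase : ∑ j ∈ univ.erase i, α a j = 0 := by
      have h := Finset.add_sum_erase univ (α a) (mem_univ i)
      rw [hα1 a ha] at h
      rw [h1] at h
      linarith
    have hz : ∀ j ∈ univ.erase i, α a j = 0 :=
      (Finset.sum_eq_zero_iff_of_nonneg (fun j _ => hα0 a ha j)).1 herase
    rw [← hα2 a ha, ← Finset.add_sum_erase univ _ (mem_univ i), h1, one_smul,
      Finset.sum_eq_zero (fun j hj => by rw [hz j hj, zero_smul]), add_zero]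
  have hvert2 : ∀ j, v j ∈ A → ∀ i, α (v j) i = if i = j then (1 : ℝ) else 0 := by
    intro j hj i
    have h := hv.eq_of_sum_eq_sum (s := univ) (w₁ := α (v j))
      (w₂ := fun i => if i = j then (1 : ℝ) else 0) ?_ ?_ i (mem_univ i)
    · exact h
    · rw [hα1 _ hj]
      simp
    · rw [hα2 _ hj]
      rw [Finset.sum_congr rfl (fun i _ => by rw [ite_smul, one_smul])]
      simp
  -- the coordinate map
  set ψ : (Fin d → ℝ) × (Fin (d + 1) → ℕ) → (Fin (d + 1) → ℝ) :=
    fun p => fun i => α p.1 i + (p.2 i : ℝ) with hψ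
  set g : (Fin d → ℝ) × (Fin (d + 1) → ℕ) → (Fin d → ℝ) :=
    fun p => p.1 + ∑ i, p.2 i • v i with hg
  set Comp : Finset (Fin (d + 1) → ℕ) := Finset.piAntidiag univ k with hComp
  have hgψ : ∀ p : (Fin d → ℝ) × (Fin (d + 1) → ℕ), p.1 ∈ A → g p = ∑ i, ψ p i • v i := by
    rintro ⟨a, c⟩ ha
    show a + ∑ i, c i • v i = ∑ i, (α a i + (c i : ℝ)) • v i
    rw [Finset.sum_congr rfl (fun i (_ : i ∈ univ) => by
      rw [add_smul, Nat.cast_smul_eq_nsmul] :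
      ∀ i ∈ univ, (α a i + (c i : ℝ)) • v i = α a i • v i + c i • v i),
      Finset.sum_add_distrib, hα2 a ha]
  -- key injectivity lemma
  have key : ∀ a ∈ A, a ∉ C → ∀ a' ∈ A, ∀ c c' : Fin (d + 1) → ℕ,
      ψ (a, c) = ψ (a', c') → a = a' ∧ c = c' := by
    intro a ha haC a' ha' c c' hψeq
    have hδ : ∀ i, α a i - α a' i = (c' i : ℝ) - (c i : ℝ) := by
      intro i
      have h := congrFun hψeq i
      simp only [hψ] at h
      linarith
    have hnonpos : ∀ i, α a i - α a' i ≤ 0 := by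
      intro i
      by_contra hpos
      push_neg at hpos
      have hci : (c i : ℝ) < (c' i : ℝ) := by linarith [hδ i]
      have hci' : c i < c' i := by exact_mod_cast hci
      have h1 : (1 : ℝ) ≤ (c' i : ℝ) - (c i : ℝ) := by
        have : (c i : ℝ) + 1 ≤ (c' i : ℝ) := by exact_mod_cast hci'
        linarith
      have hα1i : α a i = 1 := by
        have := hδ i
        have := hα0 a' ha' i
        have := hαle a ha i
        linarith
      exact haC (by rw [hvert a ha i hα1i, hC]; exact mem_image_of_mem v (mem_univ i))
    have hsum0 : ∑ i, (α a i - α a' i) = 0 := by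
      rw [Finset.sum_sub_distrib, hα1 a ha, hα1 a' ha']
      ring
    have hall0 : ∀ i, α a i - α a' i = 0 := by
      intro i
      exact (Finset.sum_eq_zero_iff_of_nonpos (fun j _ => hnonpos j)).1 hsum0 i (mem_univ i)
    constructor
    · rw [← hα2 a ha, ← hα2 a' ha']
      apply Finset.sum_congr rfl
      intro i _
      rw [show α a i = α a' i from by linarith [hall0 i]]
    · funext i
      have h := hδ i
      rw [hall0 i] at h
      have h' : (c i : ℝ) = (c' i : ℝ) := by linarith
      exact_mod_cast h'
  -- rewrite the sumset as an image
  have hAK : A + kfold k C = (A ×ˢ Comp).image g := by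
    rw [hC, kfold_image_eq v k]
    ext x
    rw [Finset.mem_add, Finset.mem_image]
    constructor
    · rintro ⟨a, ha, y, hy, rfl⟩
      rw [Finset.mem_image] at hy
      obtain ⟨c, hc, rfl⟩ := hy
      exact ⟨(a, c), Finset.mem_product.2 ⟨ha, hc⟩, rfl⟩
    · rintro ⟨⟨a, c⟩, hp, rfl⟩
      rw [Finset.mem_product] at hp
      exact ⟨a, hp.1, _, Finset.mem_image_of_mem _ hp.2, rfl⟩
  -- pass to coordinates
  have hsump : ∀ p : (Fin d → ℝ) × (Fin (d + 1) → ℕ), p ∈ A ×ˢ Comp →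
      ∑ i, ψ p i = 1 + k := by
    rintro ⟨a, c⟩ hp
    rw [Finset.mem_product] at hp
    have hcs : ∑ i, c i = k := (Finset.mem_piAntidiag.1 hp.2).1
    show ∑ i, (α a i + (c i : ℝ)) = 1 + k
    rw [Finset.sum_add_distrib, hα1 a hp.1]
    congr 1
    rw [← Nat.cast_sum]
    exact_mod_cast congrArg (fun n : ℕ => (n : ℝ)) hcs
  have hcard1 : (A + kfold k C).card = ((A ×ˢ Comp).image ψ).card := by
    rw [hAK]
    apply aux_card_image
    intro p hp q hq
    rw [Finset.mem_product] at hp hq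
    constructor
    · intro hgeq
      have h1 : ∑ i, ψ p i • v i = ∑ i, ψ q i • v i := by
        rw [← hgψ p hp.1, ← hgψ q hq.1, hgeq]
      have h0 : ∑ i, ψ p i = ∑ i, ψ q i := by
        rw [hsump p (Finset.mem_product.2 hp), hsump q (Finset.mem_product.2 hq)]
      funext i
      exact hv.eq_of_sum_eq_sum (s := univ) h0 h1 i (mem_univ i)
    · intro hψeq
      rw [hgψ p hp.1, hgψ q hq.1, hψeq]
  -- split A
  set A1 : Finset (Fin d → ℝ) := A \ C with hA1
  set A2 : Finset (Fin d → ℝ) := A ∩ C with hA2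
  have himg_split : (A ×ˢ Comp).image ψ = (A1 ×ˢ Comp).image ψ ∪ (A2 ×ˢ Comp).image ψ := by
    conv_lhs => rw [show A = A1 ∪ A2 from (Finset.sdiff_union_inter A C).symm]
    rw [Finset.union_product, Finset.image_union]
  have hT1 : ((A1 ×ˢ Comp).image ψ).card = A1.card * Comp.card := by
    rw [Finset.card_image_of_injOn, Finset.card_product]
    rintro ⟨a, c⟩ hp ⟨a', c'⟩ hq hψeq
    rw [Finset.mem_coe, Finset.mem_product] at hp hq
    have ha : a ∈ A := (Finset.mem_sdiff.1 hp.1).1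
    have haC : a ∉ C := (Finset.mem_sdiff.1 hp.1).2
    obtain ⟨h1, h2⟩ := key a ha haC a' (Finset.mem_sdiff.1 hq.1).1 c c' hψeq
    exact Prod.ext h1 h2
  set I : Finset (Fin (d + 1)) := univ.filter (fun i => v i ∈ A) with hI
  set m := I.card with hm
  have hm1 : m ≤ d + 1 := by
    rw [hm, hI]
    calc (univ.filter (fun i => v i ∈ A)).card ≤ (univ : Finset (Fin (d + 1))).card :=
          Finset.card_filter_le _ _
      _ = d + 1 := by simp
  set D : Finset (Fin (d + 1) → ℕ) :=
    (Finset.piAntidiag univ (k + 1)).filter (fun t => ∃ i, v i ∈ A ∧ t i ≠ 0) with hD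
  have hT2 : (A2 ×ˢ Comp).image ψ = D.image (fun t => fun i => (t i : ℝ)) := by
    ext x
    simp only [Finset.mem_image]
    constructor
    · rintro ⟨⟨a, c⟩, hp, rfl⟩
      rw [Finset.mem_product] at hp
      have ha : a ∈ A := (Finset.mem_inter.1 hp.1).1
      have haC : a ∈ C := (Finset.mem_inter.1 hp.1).2
      rw [hC, Finset.mem_image] at haC
      obtain ⟨j, -, hj⟩ := haC
      have hcs : ∑ i, c i = k := (Finset.mem_piAntidiag.1 hp.2).1
      refine ⟨fun i => (if i = j then 1 else 0) + c i, ?_, ?_⟩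
      · rw [hD, Finset.mem_filter]
        refine ⟨Finset.mem_piAntidiag.2 ⟨?_, fun i _ => mem_univ i⟩, ⟨j, by rw [hj]; exact ha, by simp⟩⟩
        show ∑ i, ((if i = j then 1 else 0) + c i) = k + 1
        have hind : ∑ i : Fin (d + 1), (if i = j then (1 : ℕ) else 0) = 1 := by
          simp
        rw [Finset.sum_add_distrib, hcs, hind]
        omega
      · funext i
        show (((if i = j then 1 else 0) + c i : ℕ) : ℝ) = α a i + (c i : ℝ)
        rw [← hj, hvert2 j (hj ▸ ha) i]
        push_cast
        by_cases h : i = j <;> simp [h] <;> ring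
    · rintro ⟨t, ht, rfl⟩
      rw [hD, Finset.mem_filter] at ht
      obtain ⟨htmem, j, hjA, hjne⟩ := ht
      have hts : ∑ i, t i = k + 1 := (Finset.mem_piAntidiag.1 htmem).1
      set c : Fin (d + 1) → ℕ := Function.update t j (t j - 1) with hc
      have hdec : ∀ i, t i = c i + (if i = j then 1 else 0) := by
        intro i
        by_cases h : i = j
        · subst h
          simp [hc]
          omega
        · simp [hc, Function.update_of_ne h, h]
      refine ⟨(v j, c), ?_, ?_⟩
      · rw [Finset.mem_product]
        refine ⟨Finset.mem_inter.2 ⟨hjA, by rw [hC]; exact mem_image_of_mem v (mem_univ j)⟩,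
          Finset.mem_piAntidiag.2 ⟨?_, fun i _ => mem_univ i⟩⟩
        show ∑ i, c i = k
        have hind : ∑ i : Fin (d + 1), (if i = j then (1 : ℕ) else 0) = 1 := by
          simp
        have hsum : ∑ i, t i = (∑ i, c i) + 1 := by
          rw [Finset.sum_congr rfl (fun i (_ : i ∈ univ) => hdec i), Finset.sum_add_distrib, hind]
        omega
      · funext i
        show α (v j) i + (c i : ℝ) = (t i : ℝ)
        rw [hvert2 j hjA i, hdec i]
        push_cast
        by_cases h : i = j <;> simp [h] <;> ring
  have hdisj : Disjoint ((A1 ×ˢ Comp).image ψ) ((A2 ×ˢ Comp).image ψ) := by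
    rw [Finset.disjoint_left]
    rintro x hx1 hx2
    obtain ⟨⟨a, c⟩, hp, hx⟩ := Finset.mem_image.1 hx1
    obtain ⟨⟨a', c'⟩, hq, hx'⟩ := Finset.mem_image.1 hx2
    rw [Finset.mem_product] at hp hq
    have ha : a ∈ A := (Finset.mem_sdiff.1 hp.1).1
    have haC : a ∉ C := (Finset.mem_sdiff.1 hp.1).2
    have ha' : a' ∈ A := (Finset.mem_inter.1 hq.1).1
    have heq := (key a ha haC a' ha' c c' (hx.trans hx'.symm)).1
    exact haC (heq ▸ (Finset.mem_inter.1 hq.1).2)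
  have hcastinj : Function.Injective (fun (t : Fin (d + 1) → ℕ) => (fun i => (t i : ℝ))) := by
    intro t t' h
    funext i
    exact Nat.cast_injective (congrFun h i)
  have hT2card : ((A2 ×ˢ Comp).image ψ).card = D.card := by
    rw [hT2]
    exact Finset.card_image_of_injective D hcastinj
  -- cardinality of D
  have hDneg : (Finset.piAntidiag (univ : Finset (Fin (d + 1))) (k + 1)).filter
      (fun t => ¬ ∃ i, v i ∈ A ∧ t i ≠ 0) =
      Finset.piAntidiag (univ.filter (fun i => ¬ v i ∈ A)) (k + 1) := by
    ext t
    rw [Finset.mem_filter, Finset.mem_piAntidiag, Finset.mem_piAntidiag]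
    push_neg
    constructor
    · rintro ⟨⟨hsum, -⟩, hz⟩
      constructor
      · rw [← hsum]
        apply Finset.sum_subset (Finset.filter_subset _ _)
        intro i _ hi
        rw [Finset.mem_filter] at hi
        push_neg at hi
        exact hz i (hi (mem_univ i)) -- hz i : v i ∈ A → t i = 0 ... check form
      · intro i hti
        rw [Finset.mem_filter]
        refine ⟨mem_univ i, fun hvi => hti (hz i hvi)⟩
    · rintro ⟨hsum, hsupp⟩
      refine ⟨⟨?_, fun i _ => mem_univ i⟩, ?_⟩
      · rw [← hsum]
        symm
        apply Finset.sum_subset (Finset.filter_subset _ _)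
        intro i _ hi
        rw [Finset.mem_filter] at hi
        push_neg at hi
        by_contra hti
        exact (Finset.mem_filter.1 (hsupp i hti)).2 (hi (mem_univ i))
      · intro i hvi
        by_contra hti
        exact (Finset.mem_filter.1 (hsupp i hti)).2 hvi
  have hs'card : (univ.filter (fun i => ¬ v i ∈ A)).card = d + 1 - m := by
    have h := Finset.card_filter_add_card_filter_not
      (s := (univ : Finset (Fin (d + 1)))) (p := fun i => v i ∈ A)
    rw [Finset.card_univ, Fintype.card_fin] at h
    rw [hm, hI] at *
    omega
  have hDcard : D.card + (d + k + 1 - m).choose (k + 1) = (d + k + 1).choose (k + 1) := by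
    have h := Finset.card_filter_add_card_filter_not
      (s := Finset.piAntidiag (univ : Finset (Fin (d + 1))) (k + 1))
      (p := fun t => ∃ i, v i ∈ A ∧ t i ≠ 0)
    rw [hDneg] at h
    rw [card_piAntidiag', card_piAntidiag', hs'card, Finset.card_univ, Fintype.card_fin] at h
    rw [← hD] at h
    have e1 : d + 1 - m + (k + 1) - 1 = d + k + 1 - m := by omega
    have e2 : d + 1 + (k + 1) - 1 = d + k + 1 := by omega
    rw [e1, e2] at h
    exact h
  -- identification of m with |A ∩ C|
  have hmA2 : A2.card = m := by
    rw [hA2, hm, hI]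
    have himg : A ∩ C = (univ.filter (fun i => v i ∈ A)).image v := by
      ext x
      simp only [Finset.mem_inter, hC, Finset.mem_image, Finset.mem_filter, Finset.mem_univ,
        true_and]
      constructor
      · rintro ⟨hxA, i, rfl⟩
        exact ⟨i, hxA, rfl⟩
      · rintro ⟨i, hi, rfl⟩
        exact ⟨hi, i, rfl⟩
    rw [himg, Finset.card_image_of_injective _ hinj]
  have hA1card : A1.card + m = A.card := by
    rw [← hmA2, hA1, hA2]
    have hdisj2 : Disjoint (A \ C) (A ∩ C) := Finset.disjoint_sdiff_inter A C
    rw [← Finset.card_union_of_disjoint hdisj2, Finset.sdiff_union_inter]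
  have hCompcard : Comp.card = (d + k).choose k := by
    rw [hComp, card_piAntidiag', Finset.card_univ, Fintype.card_fin]
    congr 1
    omega
  -- assemble
  have hmain : (A + kfold k C).card = A1.card * Comp.card + D.card := by
    rw [hcard1, himg_split, Finset.card_union_of_disjoint hdisj, hT1, hT2card]
  rw [hmain, hmA2]
  have hsumRHS : ∑ i ∈ Finset.Icc 1 m, (((d + k).choose k : ℤ) - ((d + k + 1 - i).choose k : ℤ))
      = m * ((d + k).choose k : ℤ) -
        (((d + k + 1).choose (k + 1) : ℤ) - ((d + k + 1 - m).choose (k + 1) : ℤ)) := by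
    rw [Finset.sum_sub_distrib, Finset.sum_const, Nat.card_Icc, hockey d k m hm1]
    simp only [Nat.add_sub_cancel]
    rw [nsmul_eq_mul]
  rw [hsumRHS, hCompcard]
  have e1 : (A1.card : ℤ) + m = A.card := by exact_mod_cast hA1card
  have e2 : (D.card : ℤ) + ((d + k + 1 - m).choose (k + 1) : ℤ)
      = ((d + k + 1).choose (k + 1) : ℤ) := by exact_mod_cast hDcard
  push_cast
  linear_combination ((d + k).choose k : ℤ) * e1 + e2
end

section
/- Let A, B ⊆ ℝ be finite sets with A ⊆ conv(B) = [0,1] and 0, 1 ∈ B, and let k ≥ 1. Then |A + kB| ≥ (k+1)(|A| - 1) + 1. -/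
open Finset Pointwise

/-- The integers `{0, 1, ..., k}` as a finset of reals. -/
noncomputable def Iset (k : ℕ) : Finset ℝ := (Finset.range (k + 1)).image (Nat.cast)

lemma Iset_subset_kfold (B : Finset ℝ) (h0 : (0 : ℝ) ∈ B) (h1 : (1 : ℝ) ∈ B) :
    ∀ k, Iset k ⊆ kfold k B := by
  intro k
  induction k with
  | zero =>
    intro x hx
    simp [Iset] at hx
    simp [kfold, hx]
  | succ n ih =>
    intro x hx
    simp only [Iset, Finset.mem_image, Finset.mem_range] at hx
    obtain ⟨j, hj, rfl⟩ := hx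
    rw [show kfold (n+1) B = kfold n B + B from rfl]
    rcases Nat.lt_succ_iff_lt_or_eq.mp hj with hj' | rfl
    · have : ((j : ℝ)) ∈ kfold n B :=
        ih (Finset.mem_image.mpr ⟨j, Finset.mem_range.mpr (by omega), rfl⟩)
      have := Finset.add_mem_add this h0
      simpa using this
    · have : ((n : ℝ)) ∈ kfold n B :=
        ih (Finset.mem_image.mpr ⟨n, Finset.mem_range.mpr (by omega), rfl⟩)
      have := Finset.add_mem_add this h1
      simpa [Nat.cast_succ] using this

lemma card_add_Iset (A : Finset ℝ) (hA : (A : Set ℝ) ⊆ Set.Icc 0 1)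
    (hne : A.Nonempty) : ∀ k, (k + 1) * A.card ≤ (A + Iset k).card + k := by
  intro k
  induction k with
  | zero =>
    have h0 : (Iset 0).Nonempty := ⟨0, by simp [Iset]⟩
    simpa using Finset.card_le_card_add_right (s := A) h0
  | succ n ih =>
    have hsplit : Iset (n + 1) = {((n + 1 : ℕ) : ℝ)} ∪ Iset n := by
      rw [Iset, Finset.range_add_one, Finset.image_insert, Finset.insert_eq]
      rfl
    have hadd : A + Iset (n + 1) = (A + Iset n) ∪ (A + {((n + 1 : ℕ) : ℝ)}) := by
      rw [hsplit, Finset.add_union, Finset.union_comm]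
    have hsingle : (A + {((n + 1 : ℕ) : ℝ)}).card = A.card := by
      rw [Finset.add_singleton]
      exact Finset.card_image_of_injective _ (add_left_injective _)
    have hinter : ((A + Iset n) ∩ (A + {((n + 1 : ℕ) : ℝ)})).card ≤ 1 := by
      apply Finset.card_le_one.mpr
      intro x hx y hy
      have hval : ∀ z ∈ (A + Iset n) ∩ (A + {((n + 1 : ℕ) : ℝ)}), z = ((n + 1 : ℕ) : ℝ) := by
        intro z hz
        rw [Finset.mem_inter] at hz
        obtain ⟨hz1, hz2⟩ := hz
        rw [Finset.mem_add] at hz1 hz2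
        obtain ⟨a, ha, j, hj, rfl⟩ := hz1
        obtain ⟨a', ha', c, hc, heq⟩ := hz2
        simp only [Finset.mem_singleton] at hc
        subst hc
        have ha0 := hA ha
        have ha'0 := hA ha'
        simp only [Set.mem_Icc] at ha0 ha'0
        have hjle : (j : ℝ) ≤ n := by
          simp only [Iset, Finset.mem_image, Finset.mem_range] at hj
          obtain ⟨m, hm, rfl⟩ := hj
          exact_mod_cast Nat.lt_succ_iff.mp hm
        have h1 : a + j ≤ (n : ℝ) + 1 := by linarith [ha0.2]
        have h2 : a + j ≥ (n : ℝ) + 1 := by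
          rw [← heq]; push_cast; linarith [ha'0.1]
        push_cast
        linarith
      rw [hval x hx, hval y hy]
    have hcard := Finset.card_union_add_card_inter (A + Iset n) (A + {((n + 1 : ℕ) : ℝ)})
    rw [hadd]
    have hmul : (n + 1 + 1) * A.card = (n + 1) * A.card + A.card := by ring
    omega

/-- One–dimensional Matolcsi–Ruzsa inequality: if `A ⊆ conv B = [0,1]`
with `0, 1 ∈ B`, then `|A + kB| ≥ (k+1)(|A|-1) + 1`. -/
theorem stmt_7 (A B : Finset ℝ)
    (hB : convexHull ℝ (B : Set ℝ) = Set.Icc 0 1)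
    (h0 : (0 : ℝ) ∈ B) (h1 : (1 : ℝ) ∈ B)
    (hA : (A : Set ℝ) ⊆ convexHull ℝ (B : Set ℝ))
    (k : ℕ) (hk : 1 ≤ k) :
    ((A + kfold k B).card : ℤ) ≥ (k + 1) * ((A.card : ℤ) - 1) + 1 := by
  rcases A.eq_empty_or_nonempty with rfl | hne
  · simp only [Finset.empty_add, Finset.card_empty, Nat.cast_zero]
    have : (0 : ℤ) ≤ (k : ℤ) := Int.ofNat_nonneg k
    nlinarith
  · have hA' : (A : Set ℝ) ⊆ Set.Icc 0 1 := hB ▸ hA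
    have h1' := card_add_Iset A hA' hne k
    have h2 : (A + Iset k).card ≤ (A + kfold k B).card :=
      Finset.card_le_card (Finset.add_subset_add_left (Iset_subset_kfold B h0 h1 k))
    have hApos : 1 ≤ A.card := Finset.card_pos.mpr hne
    have : (k + 1) * A.card ≤ (A + kfold k B).card + k := le_trans h1' (by omega)
    have := Int.ofNat_le.mpr this
    push_cast at this ⊢
    nlinarith [this]
end

section
/- Let B ⊆ ℝ be finite with conv(B) = [0,1], let Λ(B) be the subgroup of (ℝ, +) generated by B - B, and let A ⊆ [0,1] be finite with {0,1} ⊆ A. Then for every k ≥ 1, |A + kB| = (k+1)(|A|-1) + 1 holds if and only if (A + Λ(B)) ∩ [0,1] = A. -/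
open Finset Pointwise

/-- The finset `{0, 1, ..., n}` inside `ℝ`. -/
noncomputable def Ikk (n : ℕ) : Finset ℝ := (Finset.range (n + 1)).image (fun j : ℕ => (j : ℝ))

lemma mem_Ikk {n : ℕ} {x : ℝ} : x ∈ Ikk n ↔ ∃ j : ℕ, j ≤ n ∧ (j : ℝ) = x := by
  simp [Ikk, Nat.lt_succ_iff]

lemma card_add_Ikk (A : Finset ℝ) (hA : (A : Set ℝ) ⊆ Set.Icc (0 : ℝ) 1)
    (h0 : (0 : ℝ) ∈ A) (h1 : (1 : ℝ) ∈ A) :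
    ∀ n : ℕ, (A + Ikk n).card + n = (n + 1) * A.card := by
  intro n
  induction n with
  | zero =>
    have h : A + Ikk 0 = A := by
      ext x
      simp only [Finset.mem_add, mem_Ikk]
      constructor
      · rintro ⟨a, ha, z, ⟨j, hj, rfl⟩, rfl⟩
        interval_cases j
        simpa using ha
      · intro hx
        exact ⟨x, hx, 0, ⟨0, le_refl _, by norm_num⟩, add_zero x⟩
    rw [h]; ring
  | succ n ih =>
    have hI : Ikk (n + 1) = Ikk n ∪ {((n + 1 : ℕ) : ℝ)} := by
      ext x
      simp only [mem_Ikk, Finset.mem_union, Finset.mem_singleton]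
      constructor
      · rintro ⟨j, hj, rfl⟩
        rcases Nat.lt_or_ge j (n + 1) with h | h
        · exact Or.inl ⟨j, by omega, rfl⟩
        · right; congr 1; omega
      · rintro (⟨j, hj, rfl⟩ | rfl)
        · exact ⟨j, by omega, rfl⟩
        · exact ⟨n + 1, le_refl _, rfl⟩
    have hsplit : A + Ikk (n + 1) = (A + Ikk n) ∪ (A + {((n + 1 : ℕ) : ℝ)}) := by
      rw [hI, Finset.add_union]
    -- cardinality of the translate
    have hcard_tr : (A + ({((n + 1 : ℕ) : ℝ)} : Finset ℝ)).card = A.card := by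
      rw [Finset.add_singleton]
      exact Finset.card_image_of_injective _ (add_left_injective _)
    -- intersection is {n+1}
    have hint : (A + Ikk n) ∩ (A + ({((n + 1 : ℕ) : ℝ)} : Finset ℝ)) = {((n + 1 : ℕ) : ℝ)} := by
      apply Finset.Subset.antisymm
      · intro x hx
        rw [Finset.mem_inter] at hx
        obtain ⟨hx1, hx2⟩ := hx
        rw [Finset.mem_add] at hx1 hx2
        obtain ⟨a, ha, z, hz, rfl⟩ := hx1
        obtain ⟨a', ha', z', hz', he⟩ := hx2
        rw [mem_Ikk] at hz
        obtain ⟨j, hj, rfl⟩ := hz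
        rw [Finset.mem_singleton] at hz' ⊢
        subst hz'
        have haub := (hA ha).2
        have halb := (hA ha').1
        have hjb : (j : ℝ) ≤ n := by exact_mod_cast hj
        push_cast at he ⊢
        nlinarith [he, haub, halb, hjb]
      · intro x hx
        rw [Finset.mem_singleton] at hx
        subst hx
        rw [Finset.mem_inter, Finset.mem_add, Finset.mem_add]
        constructor
        · exact ⟨1, h1, (n : ℝ), mem_Ikk.mpr ⟨n, le_refl _, rfl⟩, by push_cast; ring⟩
        · exact ⟨0, h0, ((n + 1 : ℕ) : ℝ), Finset.mem_singleton_self _, by ring⟩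
    have hu := Finset.card_union_add_card_inter (A + Ikk n) (A + ({((n + 1 : ℕ) : ℝ)} : Finset ℝ))
    rw [hint, Finset.card_singleton, hcard_tr] at hu
    rw [hsplit]
    have : (A + Ikk n ∪ (A + {((n + 1 : ℕ) : ℝ)})).card + (n + 1)
        = ((A + Ikk n).card + n) + A.card := by omega
    rw [this, ih]
    ring

/-- Equality in the one–dimensional Matolcsi–Ruzsa inequality holds exactly
for the sets `A` that are stable with respect to `B`, i.e.
`(A + Λ(B)) ∩ [0,1] = A` where `Λ(B)` is the group generated by `B - B`. -/
theorem stmt_8 (A B : Finset ℝ)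
    (hB : convexHull ℝ (B : Set ℝ) = Set.Icc 0 1)
    (hA : (A : Set ℝ) ⊆ Set.Icc (0 : ℝ) 1)
    (h0 : (0 : ℝ) ∈ A) (h1 : (1 : ℝ) ∈ A)
    (k : ℕ) (hk : 1 ≤ k) :
    ((A + kfold k B).card : ℤ) = (k + 1) * ((A.card : ℤ) - 1) + 1 ↔
      ((A : Set ℝ) + (AddSubgroup.closure ((B : Set ℝ) - (B : Set ℝ)) : Set ℝ)) ∩
          Set.Icc (0 : ℝ) 1 = (A : Set ℝ) := by
  classical
  set Λ := AddSubgroup.closure ((B : Set ℝ) - (B : Set ℝ)) with hΛdef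
  -- basic facts about B
  have hBsub : (B : Set ℝ) ⊆ Set.Icc 0 1 := by
    rw [← hB]; exact subset_convexHull ℝ _
  have hBne : B.Nonempty := by
    have h : ((convexHull ℝ) (B : Set ℝ)).Nonempty := by
      rw [hB]; exact ⟨0, le_refl _, zero_le_one⟩
    rcases convexHull_nonempty_iff.mp h with ⟨x, hx⟩
    exact ⟨x, hx⟩
  have hhull : Set.Icc (0 : ℝ) 1 ⊆ Set.Icc (B.min' hBne) (B.max' hBne) := by
    rw [← hB]
    exact convexHull_min (fun x hx => ⟨B.min'_le x hx, B.le_max' x hx⟩) (convex_Icc _ _)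
  have hB0 : (0 : ℝ) ∈ B := by
    have ha := (hhull ⟨le_refl 0, zero_le_one⟩).1
    have hb := (hBsub (Finset.mem_coe.mpr (B.min'_mem hBne))).1
    have : B.min' hBne = 0 := le_antisymm ha hb
    rw [← this]; exact B.min'_mem hBne
  have hB1 : (1 : ℝ) ∈ B := by
    have ha := (hhull ⟨zero_le_one, le_refl 1⟩).2
    have hb := (hBsub (Finset.mem_coe.mpr (B.max'_mem hBne))).2
    have : B.max' hBne = 1 := le_antisymm hb ha
    rw [← this]; exact B.max'_mem hBne
  -- the group Λ
  have hBΛ : ∀ b ∈ B, b ∈ Λ := by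
    intro b hb
    have hmem : b - 0 ∈ (B : Set ℝ) - (B : Set ℝ) :=
      Set.sub_mem_sub (Finset.mem_coe.mpr hb) (Finset.mem_coe.mpr hB0)
    have := AddSubgroup.subset_closure hmem
    simpa using this
  have h1Λ : (1 : ℝ) ∈ Λ := hBΛ 1 hB1
  have hZΛ : ∀ m : ℤ, ((m : ℝ)) ∈ Λ := by
    intro m
    have := AddSubgroup.zsmul_mem Λ h1Λ m
    simpa using this
  -- kfold facts
  have hkfold : ∀ n : ℕ, ∀ x ∈ kfold n B, 0 ≤ x ∧ x ≤ (n : ℝ) ∧ x ∈ Λ := by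
    intro n
    induction n with
    | zero =>
      intro x hx
      simp only [kfold, Finset.mem_singleton] at hx
      subst hx
      exact ⟨le_refl _, by norm_num, zero_mem Λ⟩
    | succ n ih =>
      intro x hx
      rw [show kfold (n + 1) B = kfold n B + B from rfl, Finset.mem_add] at hx
      obtain ⟨y, hy, b, hb, rfl⟩ := hx
      obtain ⟨hy0, hyn, hyΛ⟩ := ih y hy
      have hb' := hBsub (Finset.mem_coe.mpr hb)
      refine ⟨by linarith [hb'.1], by push_cast; linarith [hb'.2],
        add_mem hyΛ (hBΛ b hb)⟩
  have hzero_kfold : ∀ n : ℕ, (0 : ℝ) ∈ kfold n B := by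
    intro n
    induction n with
    | zero => simp [kfold]
    | succ n ih =>
      rw [show kfold (n + 1) B = kfold n B + B from rfl, Finset.mem_add]
      exact ⟨0, ih, 0, hB0, add_zero 0⟩
  have hnat_kfold : ∀ n : ℕ, ∀ j : ℕ, j ≤ n → (j : ℝ) ∈ kfold n B := by
    intro n
    induction n with
    | zero =>
      intro j hj
      interval_cases j
      simp [kfold]
    | succ n ih =>
      intro j hj
      rw [show kfold (n + 1) B = kfold n B + B from rfl, Finset.mem_add]
      rcases Nat.lt_or_ge j (n + 1) with h | h
      · exact ⟨j, ih j (by omega), 0, hB0, add_zero _⟩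
      · have hj' : j = n + 1 := by omega
        subst hj'
        exact ⟨n, ih n (le_refl _), 1, hB1, by push_cast; ring⟩
  have hIk_sub : Ikk k ⊆ kfold k B := by
    intro x hx
    obtain ⟨j, hj, rfl⟩ := mem_Ikk.mp hx
    exact hnat_kfold k j hj
  have hsub : A + Ikk k ⊆ A + kfold k B := Finset.add_subset_add_left hIk_sub
  have hcardIk := card_add_Ikk A hA h0 h1 k
  have h0A' : (0 : ℝ) ∈ A.erase 1 := Finset.mem_erase.mpr ⟨by norm_num, h0⟩
  have hA'bounds : ∀ a ∈ A.erase 1, 0 ≤ a ∧ a < 1 := by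
    intro a ha
    obtain ⟨hne, haA⟩ := Finset.mem_erase.mp ha
    have := hA (Finset.mem_coe.mpr haA)
    exact ⟨this.1, lt_of_le_of_ne this.2 hne⟩
  have hA'A : A.erase 1 ⊆ A := Finset.erase_subset _ _
  have hfractA : ∀ a ∈ A, Int.fract a ∈ A.erase 1 := by
    intro a ha
    by_cases h : a = 1
    · subst h
      rw [Int.fract_one]
      exact h0A'
    · have hb := hA (Finset.mem_coe.mpr ha)
      rw [Int.fract_eq_self.mpr ⟨hb.1, lt_of_le_of_ne hb.2 h⟩]
      exact Finset.mem_erase.mpr ⟨h, ha⟩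
  -- the "flip" lemma: if translation by t preserves A', so does translation by -t
  have hflip : ∀ t : ℝ, (∀ c ∈ A.erase 1, Int.fract (c + t) ∈ A.erase 1) →
      ∀ c ∈ A.erase 1, Int.fract (c - t) ∈ A.erase 1 := by
    intro t ht c hc
    have himg : (A.erase 1).image (fun a => Int.fract (a + t)) ⊆ A.erase 1 := by
      intro x hx
      obtain ⟨a, ha, rfl⟩ := Finset.mem_image.mp hx
      exact ht a ha
    have hinj : Set.InjOn (fun a => Int.fract (a + t)) ↑(A.erase 1) := by
      intro x hx y hy hxy
      simp only at hxy
      obtain ⟨z, hz⟩ := Int.fract_eq_fract.mp hxy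
      have hx' := hA'bounds x hx
      have hy' := hA'bounds y hy
      have hz' : (z : ℝ) = x - y := by linarith
      have hz1 : (z : ℝ) < 1 := by rw [hz']; linarith
      have hz2 : (-1 : ℝ) < z := by rw [hz']; linarith
      have : z = 0 := by
        have a1 : z < 1 := by exact_mod_cast hz1
        have a2 : -1 < z := by exact_mod_cast hz2
        omega
      rw [this] at hz'
      push_cast at hz'
      linarith
    have heq : (A.erase 1).image (fun a => Int.fract (a + t)) = A.erase 1 :=
      Finset.eq_of_subset_of_card_le himg
        (le_of_eq (Finset.card_image_of_injOn hinj).symm)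
    obtain ⟨a₀, ha₀, hfa⟩ := Finset.mem_image.mp (heq ▸ hc)
    have hb := hA'bounds a₀ ha₀
    have hfl := Int.floor_add_fract (a₀ + t)
    rw [hfa] at hfl
    have hc' : c - t = a₀ - ((⌊a₀ + t⌋ : ℤ) : ℝ) := by linarith
    rw [hc', Int.fract_sub_intCast, Int.fract_eq_self.mpr ⟨hb.1, hb.2⟩]
    exact ha₀
  constructor
  · -- equality of cardinalities implies stability
    intro hcard
    have e1 : ((A + Ikk k).card : ℤ) + k = (k + 1) * A.card := by exact_mod_cast hcardIk
    have e2 : ((A + kfold k B).card : ℤ) + k = (k + 1) * A.card := by rw [hcard]; ring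
    have hcards : ((A + Ikk k).card : ℤ) = ((A + kfold k B).card : ℤ) := by linarith
    have hEq : A + Ikk k = A + kfold k B :=
      Finset.eq_of_subset_of_card_le hsub (by exact_mod_cast le_of_eq hcards.symm)
    obtain ⟨m, rfl⟩ : ∃ m, k = m + 1 := ⟨k - 1, by omega⟩
    -- the key fact coming from the cardinality equality
    have hkey : ∀ a ∈ A, ∀ b ∈ B, Int.fract (a + b) ∈ A.erase 1 := by
      intro a ha b hb
      have hmem : a + b ∈ A + kfold (m + 1) B := by
        rw [Finset.mem_add]
        refine ⟨a, ha, b, ?_, rfl⟩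
        rw [show kfold (m + 1) B = kfold m B + B from rfl, Finset.mem_add]
        exact ⟨0, hzero_kfold m, b, hb, zero_add b⟩
      rw [← hEq, Finset.mem_add] at hmem
      obtain ⟨a', ha', z, hz, he⟩ := hmem
      obtain ⟨j, hj, rfl⟩ := mem_Ikk.mp hz
      have hab : a + b = a' + ((j : ℤ) : ℝ) := by push_cast; linarith
      rw [hab, Int.fract_add_intCast]
      exact hfractA a' ha'
    -- invariance under the whole group Λ
    have hmain : ∀ l ∈ Λ, ∀ c ∈ A.erase 1, Int.fract (c + l) ∈ A.erase 1 := by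
      intro l hl
      refine AddSubgroup.closure_induction
        (p := fun g _ => ∀ c ∈ A.erase 1, Int.fract (c + g) ∈ A.erase 1)
        ?_ ?_ ?_ ?_ hl
      · intro x hx c hc
        rw [Set.mem_sub] at hx
        obtain ⟨b, hb, b', hb', rfl⟩ := hx
        have hbB : b ∈ B := Finset.mem_coe.mp hb
        have hb'B : b' ∈ B := Finset.mem_coe.mp hb'
        have h1' : Int.fract (c + b) ∈ A.erase 1 := hkey c (hA'A hc) b hbB
        have hfl := Int.floor_add_fract (c + b)
        have hre : c + (b - b') = (Int.fract (c + b) - b') + ((⌊c + b⌋ : ℤ) : ℝ) := by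
          linarith
        rw [hre, Int.fract_add_intCast]
        exact hflip b' (fun c' hc' => hkey c' (hA'A hc') b' hb'B) _ h1'
      · intro c hc
        obtain ⟨hc0, hc1⟩ := hA'bounds c hc
        rw [add_zero, Int.fract_eq_self.mpr ⟨hc0, hc1⟩]
        exact hc
      · intro x y hx hy px py c hc
        have h1' : Int.fract (c + x) ∈ A.erase 1 := px c hc
        have hfl := Int.floor_add_fract (c + x)
        have hre : c + (x + y) = (Int.fract (c + x) + y) + ((⌊c + x⌋ : ℤ) : ℝ) := by
          linarith
        rw [hre, Int.fract_add_intCast]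
        exact py _ h1'
      · intro x hx px c hc
        have := hflip x px c hc
        simpa [sub_eq_add_neg] using this
    -- conclude stability
    ext x
    simp only [Set.mem_inter_iff, Set.mem_add, SetLike.mem_coe, Finset.mem_coe]
    constructor
    · rintro ⟨⟨a, ha, l, hl, rfl⟩, hx⟩
      have haf : a ∈ A := ha
      have hxa : ∃ c ∈ A.erase 1, ∃ μ ∈ Λ, a + l = c + μ := by
        by_cases h : a = 1
        · exact ⟨0, h0A', l + 1, add_mem hl h1Λ, by rw [h]; ring⟩
        · exact ⟨a, Finset.mem_erase.mpr ⟨h, haf⟩, l, hl, rfl⟩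
      obtain ⟨c, hc, μ, hμ, he⟩ := hxa
      have hf : Int.fract (a + l) ∈ A.erase 1 := by
        rw [he]; exact hmain μ hμ c hc
      by_cases hx1 : a + l = 1
      · rw [hx1]; exact h1
      · have hfe : Int.fract (a + l) = a + l :=
          Int.fract_eq_self.mpr ⟨hx.1, lt_of_le_of_ne hx.2 hx1⟩
        rw [← hfe]
        exact hA'A hf
    · intro hx
      exact ⟨⟨x, hx, 0, zero_mem Λ, add_zero x⟩, hA (Finset.mem_coe.mpr hx)⟩
  · -- stability implies equality of cardinalities
    intro hstab
    have hsub2 : A + kfold k B ⊆ A + Ikk k := by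
      intro x hx
      rw [Finset.mem_add] at hx
      obtain ⟨a, ha, c, hc, rfl⟩ := hx
      obtain ⟨hc0, hck, hcΛ⟩ := hkfold k c hc
      have haI := hA (Finset.mem_coe.mpr ha)
      have hx0 : (0 : ℝ) ≤ a + c := by linarith [haI.1]
      have hfnn : (0 : ℤ) ≤ ⌊a + c⌋ := Int.floor_nonneg.mpr hx0
      set j : ℕ := min k (⌊a + c⌋).toNat with hj
      have hjk : j ≤ k := min_le_left _ _
      have hjle : (j : ℝ) ≤ a + c := by
        rcases le_or_gt ((⌊a + c⌋).toNat) k with h | h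
        · rw [hj, min_eq_right h]
          have h2 : (((⌊a + c⌋).toNat : ℕ) : ℝ) = ((⌊a + c⌋ : ℤ) : ℝ) := by
            exact_mod_cast congrArg (fun z : ℤ => (z : ℝ)) (Int.toNat_of_nonneg hfnn)
          rw [h2]
          exact Int.floor_le _
        · rw [hj, min_eq_left (le_of_lt h)]
          have h3 : (k : ℤ) < ⌊a + c⌋ := by
            have := Int.lt_toNat.mp h
            exact_mod_cast this
          have h4 : ((k : ℤ) : ℝ) < ((⌊a + c⌋ : ℤ) : ℝ) := by exact_mod_cast h3
          have h5 := Int.floor_le (a + c)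
          push_cast at h4 ⊢
          linarith
      have hle1 : a + c - j ≤ 1 := by
        rcases le_or_gt ((⌊a + c⌋).toNat) k with h | h
        · rw [hj, min_eq_right h]
          have h2 : (((⌊a + c⌋).toNat : ℕ) : ℝ) = ((⌊a + c⌋ : ℤ) : ℝ) := by
            exact_mod_cast congrArg (fun z : ℤ => (z : ℝ)) (Int.toNat_of_nonneg hfnn)
          rw [h2]
          have := Int.lt_floor_add_one (a + c)
          linarith
        · rw [hj, min_eq_left (le_of_lt h)]
          linarith [haI.2, hck]
      have hyΛ : a + c - j ∈ ((A : Set ℝ) + (Λ : Set ℝ)) ∩ Set.Icc 0 1 := by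
        refine ⟨?_, ⟨by linarith, hle1⟩⟩
        rw [Set.mem_add]
        refine ⟨a, Finset.mem_coe.mpr ha, c - j, ?_, by ring⟩
        have hjΛ : ((j : ℕ) : ℝ) ∈ Λ := by
          have := hZΛ (j : ℤ)
          push_cast at this
          exact this
        exact sub_mem hcΛ hjΛ
      rw [hstab] at hyΛ
      rw [Finset.mem_add]
      exact ⟨a + c - j, Finset.mem_coe.mp hyΛ, (j : ℝ), mem_Ikk.mpr ⟨j, hjk, rfl⟩, by ring⟩
    have hEq : A + Ikk k = A + kfold k B := Finset.Subset.antisymm hsub hsub2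
    rw [← hEq]
    have e1 : ((A + Ikk k).card : ℤ) + k = (k + 1) * A.card := by exact_mod_cast hcardIk
    linarith [e1]
end

section
/- Let B ⊆ ℝ be finite with conv(B) = [0,1] and let C ⊆ (0,1) be finite. Then for every k ≥ 1, |C + kB| ≥ (k+1)|C|, with equality if and only if (C + Λ(B)) ∩ [0,1] = C, where Λ(B) is the subgroup of ℝ generated by B - B. -/
open Finset Pointwise

private lemma kfold_mem_Icc {B : Finset ℝ} (hB : (B : Set ℝ) ⊆ Set.Icc 0 1) :
    ∀ k, ∀ s ∈ kfold k B, s ∈ Set.Icc (0 : ℝ) (k : ℝ) := by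
  intro k
  induction k with
  | zero => intro s hs; simp [kfold] at hs; simp [hs]
  | succ n ih =>
    intro s hs
    rw [kfold, Finset.mem_add] at hs
    obtain ⟨y, hy, z, hz, rfl⟩ := hs
    have h1 := ih y hy
    have h2 := hB hz
    constructor
    · have := h1.1; have := h2.1; linarith
    · have := h1.2; have := h2.2; push_cast; linarith

private lemma zero_mem_kfold {B : Finset ℝ} (h0 : (0 : ℝ) ∈ B) :
    ∀ k, (0 : ℝ) ∈ kfold k B := by
  intro k
  induction k with
  | zero => simp [kfold]
  | succ n ih =>
    rw [kfold, Finset.mem_add]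
    exact ⟨0, ih, 0, h0, by ring⟩

private lemma natCast_mem_kfold {B : Finset ℝ} (h0 : (0 : ℝ) ∈ B) (h1 : (1 : ℝ) ∈ B) :
    ∀ k j, j ≤ k → ((j : ℕ) : ℝ) ∈ kfold k B := by
  intro k
  induction k with
  | zero => intro j hj; interval_cases j; simp [kfold]
  | succ n ih =>
    intro j hj
    rw [kfold, Finset.mem_add]
    rcases Nat.lt_or_ge j (n + 1) with h | h
    · exact ⟨(j : ℝ), ih j (Nat.lt_succ_iff.mp h), 0, h0, by ring⟩
    · have : j = n + 1 := le_antisymm hj h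
      subst this
      exact ⟨(n : ℝ), ih n le_rfl, 1, h1, by push_cast; ring⟩

private lemma mem_kfold_of_mem {B : Finset ℝ} (h0 : (0 : ℝ) ∈ B) {b : ℝ} (hb : b ∈ B) :
    ∀ k, 1 ≤ k → b ∈ kfold k B := by
  intro k hk
  obtain ⟨n, rfl⟩ := Nat.exists_eq_add_of_le hk
  rw [Nat.add_comm, kfold, Finset.mem_add]
  exact ⟨0, zero_mem_kfold h0 n, b, hb, by ring⟩

private lemma nat_eq_of_abs_sub_lt {a b : ℕ} (h : |(a : ℝ) - (b : ℝ)| < 1) : a = b := by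
  rw [abs_lt] at h
  have h1 : (a : ℝ) < (b : ℝ) + 1 := by linarith [h.2]
  have h2 : (b : ℝ) < (a : ℝ) + 1 := by linarith [h.1]
  have h1' : a < b + 1 := by exact_mod_cast h1
  have h2' : b < a + 1 := by exact_mod_cast h2
  omega

/-- If `conv B = [0,1]` and `C ⊆ (0,1)` is finite, then `|C + kB| ≥ (k+1)|C|`,
with equality iff `C` is stable with respect to `B`. -/
theorem stmt_9 (B C : Finset ℝ)
    (hB : convexHull ℝ (B : Set ℝ) = Set.Icc 0 1)
    (hC : (C : Set ℝ) ⊆ Set.Ioo (0 : ℝ) 1)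
    (k : ℕ) (hk : 1 ≤ k) :
    (C + kfold k B).card ≥ (k + 1) * C.card ∧
      ((C + kfold k B).card = (k + 1) * C.card ↔
        ((C : Set ℝ) + (AddSubgroup.closure ((B : Set ℝ) - (B : Set ℝ)) : Set ℝ)) ∩
            Set.Icc (0 : ℝ) 1 = (C : Set ℝ)) := by
  classical
  set Λ : AddSubgroup ℝ := AddSubgroup.closure ((B : Set ℝ) - (B : Set ℝ)) with hΛ
  -- Basic facts about B
  have hBsub : (B : Set ℝ) ⊆ Set.Icc 0 1 := by
    rw [← hB]; exact subset_convexHull ℝ _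
  have hBne : B.Nonempty := by
    rw [← Finset.coe_nonempty, ← convexHull_nonempty_iff (𝕜 := ℝ), hB]
    exact Set.nonempty_Icc.mpr zero_le_one
  have h0B : (0 : ℝ) ∈ B := by
    have hmin : B.min' hBne ∈ B := B.min'_mem hBne
    have h1 : (0 : ℝ) ≤ B.min' hBne := (hBsub hmin).1
    have h2 : convexHull ℝ (B : Set ℝ) ⊆ Set.Ici (B.min' hBne) := by
      apply convexHull_min _ (convex_Ici _)
      intro x hx
      exact B.min'_le x hx
    have h3 : (0 : ℝ) ∈ Set.Ici (B.min' hBne) := by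
      apply h2; rw [hB]; exact ⟨le_refl 0, zero_le_one⟩
    have : B.min' hBne = 0 := le_antisymm (by exact h3) h1
    rwa [← this]
  have h1B : (1 : ℝ) ∈ B := by
    have hmax : B.max' hBne ∈ B := B.max'_mem hBne
    have h1 : B.max' hBne ≤ 1 := (hBsub hmax).2
    have h2 : convexHull ℝ (B : Set ℝ) ⊆ Set.Iic (B.max' hBne) := by
      apply convexHull_min _ (convex_Iic _)
      intro x hx
      exact B.le_max' x hx
    have h3 : (1 : ℝ) ∈ Set.Iic (B.max' hBne) := by
      apply h2; rw [hB]; exact ⟨zero_le_one, le_refl 1⟩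
    have : B.max' hBne = 1 := le_antisymm h1 (by exact h3)
    rwa [← this]
  -- B ⊆ Λ
  have hBΛ : ∀ b ∈ B, b ∈ Λ := by
    intro b hb
    apply AddSubgroup.subset_closure
    exact ⟨b, hb, 0, h0B, by ring⟩
  have h1Λ : (1 : ℝ) ∈ Λ := hBΛ 1 h1B
  have hkfoldΛ : ∀ n, ∀ s ∈ kfold n B, s ∈ Λ := by
    intro n
    induction n with
    | zero => intro s hs; simp [kfold] at hs; rw [hs]; exact Λ.zero_mem
    | succ m ih =>
      intro s hs
      rw [kfold, Finset.mem_add] at hs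
      obtain ⟨y, hy, z, hz, rfl⟩ := hs
      exact Λ.add_mem (ih y hy) (hBΛ z hz)
  have hintΛ : ∀ m : ℤ, ((m : ℤ) : ℝ) ∈ Λ := by
    intro m
    have := Λ.zsmul_mem h1Λ m
    simpa using this
  -- The set D = {0, 1, ..., k} as reals
  set D : Finset ℝ := Finset.image (fun j : ℕ => (j : ℝ)) (Finset.range (k + 1)) with hD
  have hDk : D ⊆ kfold k B := by
    intro x hx
    rw [hD, Finset.mem_image] at hx
    obtain ⟨j, hj, rfl⟩ := hx
    exact natCast_mem_kfold h0B h1B k j (Nat.lt_succ_iff.mp (Finset.mem_range.mp hj))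
  have hcardD : D.card = k + 1 := by
    rw [hD, Finset.card_image_of_injective _ Nat.cast_injective, Finset.card_range]
  -- card (C + D) = (k+1) * card C
  have hcardCD : (C + D).card = (k + 1) * C.card := by
    rw [← Finset.image_add_product]
    rw [Finset.card_image_of_injOn]
    · rw [Finset.card_product, hcardD]; ring
    · rintro ⟨c₁, d₁⟩ h₁ ⟨c₂, d₂⟩ h₂ heq
      obtain ⟨hc₁, hd₁⟩ := Finset.mem_product.mp h₁
      obtain ⟨hc₂, hd₂⟩ := Finset.mem_product.mp h₂
      rw [hD, Finset.mem_image] at hd₁ hd₂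
      obtain ⟨j₁, _, rfl⟩ := hd₁
      obtain ⟨j₂, _, rfl⟩ := hd₂
      have hc₁' : c₁ ∈ Set.Ioo (0:ℝ) 1 := hC hc₁
      have hc₂' : c₂ ∈ Set.Ioo (0:ℝ) 1 := hC hc₂
      have heq' : c₁ + (j₁ : ℝ) = c₂ + (j₂ : ℝ) := heq
      have : j₁ = j₂ := by
        apply nat_eq_of_abs_sub_lt
        rw [abs_lt]
        constructor
        · have := hc₁'.1; have := hc₁'.2; have := hc₂'.1; have := hc₂'.2; linarith
        · have := hc₁'.1; have := hc₁'.2; have := hc₂'.1; have := hc₂'.2; linarith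
      subst this
      have : c₁ = c₂ := by linarith [heq']
      rw [this]
  have hsub : C + D ⊆ C + kfold k B := Finset.add_subset_add_left hDk
  have hineq : (k + 1) * C.card ≤ (C + kfold k B).card := by
    rw [← hcardCD]
    exact Finset.card_le_card hsub
  refine ⟨hineq, ?_, ?_⟩
  · -- equality → stable
    intro heq
    have hset : C + D = C + kfold k B := by
      apply Finset.eq_of_subset_of_card_le hsub
      rw [heq, hcardCD]
    -- the key closure property: for all λ in Λ, translation mod ℤ maps C into C
    set P : ℝ → Prop := fun lam => ∀ c ∈ C, ∃ c' ∈ C, ∃ m : ℤ, c + lam = c' + m with hP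
    have hPzero : P 0 := fun c hc => ⟨c, hc, 0, by simp⟩
    have hPadd : ∀ x y, P x → P y → P (x + y) := by
      intro x y hx hy c hc
      obtain ⟨c₁, hc₁, m₁, hm₁⟩ := hx c hc
      obtain ⟨c₂, hc₂, m₂, hm₂⟩ := hy c₁ hc₁
      exact ⟨c₂, hc₂, m₁ + m₂, by push_cast; linarith⟩
    have hPneg : ∀ x, P x → P (-x) := by
      intro x hx
      -- choose a function realizing P x
      have hfun : ∃ f : ℝ → ℝ, ∃ g : ℝ → ℤ, ∀ c ∈ C, f c ∈ C ∧ c + x = f c + g c := by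
        refine ⟨fun c => if hc : c ∈ C then (hx c hc).choose else 0,
                fun c => if hc : c ∈ C then (hx c hc).choose_spec.2.choose else 0, ?_⟩
        intro c hc
        simp only [dif_pos hc]
        exact ⟨(hx c hc).choose_spec.1, (hx c hc).choose_spec.2.choose_spec⟩
      obtain ⟨f, g, hfg⟩ := hfun
      -- f is injective on C, hence surjective onto C
      have hinj : ∀ a₁ ∈ C, ∀ a₂ ∈ C, f a₁ = f a₂ → a₁ = a₂ := by
        intro a₁ h₁ a₂ h₂ hfeq
        obtain ⟨_, he₁⟩ := hfg a₁ h₁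
        obtain ⟨_, he₂⟩ := hfg a₂ h₂
        have : a₁ - a₂ = ((g a₁ : ℝ) - (g a₂ : ℝ)) := by rw [← hfeq] at he₂; linarith
        have ha₁ := hC h₁
        have ha₂ := hC h₂
        have hz : g a₁ = g a₂ := by
          have : |((g a₁ : ℤ) : ℝ) - ((g a₂ : ℤ) : ℝ)| < 1 := by
            rw [← this, abs_lt]
            constructor
            · have := ha₁.1; have := ha₂.2; linarith
            · have := ha₁.2; have := ha₂.1; linarith
          have h2 : |((g a₁ - g a₂ : ℤ) : ℝ)| < 1 := by push_cast; exact this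
          have h3 : |g a₁ - g a₂| < 1 := by exact_mod_cast h2
          have h4 := abs_lt.mp h3
          omega
        rw [hz] at this
        linarith
      have hsurj : ∀ c ∈ C, ∃ a ∈ C, f a = c := by
        intro c hc
        have := Finset.surj_on_of_inj_on_of_card_le (s := C) (t := C)
          (fun a _ => f a) (fun a ha => (hfg a ha).1)
          (fun a₁ a₂ h₁ h₂ h => hinj a₁ h₁ a₂ h₂ h) le_rfl c hc
        obtain ⟨a, ha, hfa⟩ := this
        exact ⟨a, ha, hfa.symm⟩
      intro c hc
      obtain ⟨a, ha, hfa⟩ := hsurj c hc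
      obtain ⟨_, he⟩ := hfg a ha
      refine ⟨a, ha, -g a, ?_⟩
      rw [hfa] at he
      push_cast
      linarith
    -- P holds on B - B
    have hPBB : ∀ lam ∈ (B : Set ℝ) - (B : Set ℝ), P lam := by
      have hPb : ∀ b ∈ B, P b := by
        intro b hb c hc
        have hcb : c + b ∈ C + D := by
          rw [hset, Finset.mem_add]
          exact ⟨c, hc, b, mem_kfold_of_mem h0B hb k hk, rfl⟩
        rw [Finset.mem_add] at hcb
        obtain ⟨c', hc', d, hd, hcd⟩ := hcb
        rw [hD, Finset.mem_image] at hd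
        obtain ⟨j, _, rfl⟩ := hd
        exact ⟨c', hc', (j : ℤ), by push_cast; linarith⟩
      rintro lam ⟨b₁, hb₁, b₂, hb₂, rfl⟩
      have := hPadd _ _ (hPb b₁ hb₁) (hPneg _ (hPb b₂ hb₂))
      simpa [sub_eq_add_neg] using this
    -- P holds on all of Λ
    have hPΛ : ∀ lam ∈ Λ, P lam := by
      intro lam hlam
      have : Λ ≤ AddSubgroup.mk
          ⟨⟨{x : ℝ | P x}, by intro a b ha hb; exact hPadd a b ha hb⟩, hPzero⟩
          (by intro a ha; exact hPneg a ha) := by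
        rw [hΛ]
        apply (AddSubgroup.closure_le _).mpr
        intro x hx
        exact hPBB x hx
      exact this hlam
    -- conclude stability
    ext x
    constructor
    · rintro ⟨hx1, hx2⟩
      obtain ⟨c, hc, lam, hlam, rfl⟩ := hx1
      obtain ⟨c', hc', m, hm⟩ := hPΛ lam hlam c (Finset.mem_coe.mp hc)
      have hc'' := hC (Finset.mem_coe.mpr hc')
      have hx2' : (0 : ℝ) ≤ c + lam ∧ c + lam ≤ 1 := by simpa using hx2
      have hm0 : m = 0 := by
        have h1 : ((m : ℤ) : ℝ) = c + lam - c' := by linarith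
        have h2 : |((m : ℤ) : ℝ)| < 1 := by
          rw [h1, abs_lt]
          constructor
          · have := hx2'.1; have := hc''.2; linarith
          · have := hx2'.2; have := hc''.1; linarith
        have h3 : |m| < 1 := by exact_mod_cast h2
        have h4 := abs_lt.mp h3
        omega
      rw [hm0] at hm
      simp only [Int.cast_zero, add_zero] at hm
      show c + lam ∈ (C : Set ℝ)
      rw [hm]
      exact Finset.mem_coe.mpr hc'
    · intro hx
      have hx' := hC hx
      refine ⟨⟨x, hx, 0, Λ.zero_mem, by ring⟩, le_of_lt hx'.1, le_of_lt hx'.2⟩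
  · -- stable → equality
    intro hstable
    have hsub2 : C + kfold k B ⊆ C + D := by
      intro t ht
      rw [Finset.mem_add] at ht
      obtain ⟨c, hc, s, hs, rfl⟩ := ht
      have hcr := hC hc
      have hsr := kfold_mem_Icc hBsub k s hs
      set j : ℤ := ⌊c + s⌋ with hj
      set x : ℝ := c + s - j with hxdef
      have hx01 : x ∈ Set.Ico (0 : ℝ) 1 := by
        constructor
        · rw [hxdef]; have := Int.floor_le (c + s); linarith
        · rw [hxdef]; have := Int.lt_floor_add_one (c + s); linarith
      have hxC : x ∈ C := by
        have hxS : x ∈ (C : Set ℝ) := by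
          rw [← hstable]
          exact ⟨⟨c, Finset.mem_coe.mpr hc, s - j,
            Λ.sub_mem (hkfoldΛ k s hs) (hintΛ j), by rw [hxdef]; ring⟩,
            hx01.1, le_of_lt hx01.2⟩
        exact Finset.mem_coe.mp hxS
      have hxr := hC hxC
      -- j ∈ [0, k]
      have hj0 : 0 ≤ j := by
        rw [hj, Int.floor_nonneg]
        have := hcr.1; have := hsr.1; linarith
      have hjk : j ≤ k := by
        have : (j : ℝ) = c + s - x := by rw [hxdef]; ring
        have hlt : (j : ℝ) < (k : ℝ) + 1 := by
          rw [this]; have := hcr.2; have := hsr.2; have := hxr.1; linarith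
        have : j < (k : ℤ) + 1 := by exact_mod_cast hlt
        omega
      rw [Finset.mem_add]
      have hcast : ((j.toNat : ℕ) : ℝ) = (j : ℝ) := by
        exact_mod_cast congrArg (Int.cast : ℤ → ℝ) (Int.toNat_of_nonneg hj0)
      refine ⟨x, hxC, ((j.toNat : ℕ) : ℝ), ?_, ?_⟩
      · rw [hD, Finset.mem_image]
        refine ⟨j.toNat, Finset.mem_range.mpr ?_, rfl⟩
        omega
      · rw [hcast, hxdef]; ring
    have hset : C + kfold k B = C + D :=
      Finset.Subset.antisymm hsub2 hsub
    rw [hset, hcardCD]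
end

section
/- Let A ⊆ ℝ^d be finite and d-dimensional, k ≥ 2, and suppose A consists of the vertices v₀, ..., v_d of a d-simplex together with an arithmetic progression contained in the edge [v₀, v_d] that starts at v₀ and ends at v_d. Then |kA| = C(d+k-1, k-1)·|A| - (k-1)·C(d+k-1, k). -/
open Finset Pointwise

/-- tuples with sum ≤ n -/
def Sle (N n : ℕ) : Finset (Fin N → ℕ) :=
  (Fintype.piFinset fun _ : Fin N => range (n + 1)).filter (fun c => ∑ i, c i ≤ n)

lemma mem_Sle {N n : ℕ} {c : Fin N → ℕ} : c ∈ Sle N n ↔ ∑ i, c i ≤ n := by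
  simp only [Sle, mem_filter, Fintype.mem_piFinset, mem_range, Nat.lt_succ_iff]
  refine ⟨fun h => h.2, fun h => ⟨fun i => le_trans ?_ h, h⟩⟩
  exact Finset.single_le_sum (fun i _ => Nat.zero_le _) (mem_univ i)

lemma card_Sle (N n : ℕ) : (Sle N n).card = (n + N).choose N := by
  induction N generalizing n with
  | zero =>
    rw [Nat.choose_zero_right]
    refine Finset.card_eq_one.mpr ⟨(fun i => i.elim0), ?_⟩
    ext c
    simp only [mem_Sle, Finset.mem_singleton]
    constructor
    · intro _; funext i; exact i.elim0
    · intro h; subst h; simp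
  | succ N ih =>
    have hmaps : ∀ b ∈ Sle (N + 1) n, b (Fin.last N) ∈ range (n + 1) := by
      intro b hb
      rw [mem_Sle] at hb
      rw [mem_range, Nat.lt_succ_iff]
      exact le_trans (Finset.single_le_sum (fun i _ => Nat.zero_le _) (mem_univ _)) hb
    rw [Finset.card_eq_sum_card_fiberwise hmaps]
    have hfib : ∀ x ∈ range (n + 1),
        ((Sle (N + 1) n).filter (fun b => b (Fin.last N) = x)).card = (Sle N (n - x)).card := by
      intro x hx
      rw [mem_range, Nat.lt_succ_iff] at hx
      refine Finset.card_bij' (fun b _ => Fin.init b) (fun c _ => Fin.snoc c x) ?_ ?_ ?_ ?_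
      case refine_1 =>
        intro b hb
        simp only [mem_filter, mem_Sle] at hb
        rw [mem_Sle]
        have hs : ∑ i : Fin (N + 1), b i = (∑ i : Fin N, Fin.init b i) + b (Fin.last N) := by
          rw [Fin.sum_univ_castSucc]; rfl
        omega
      case refine_2 =>
        intro c hc
        rw [mem_Sle] at hc
        simp only [mem_filter, mem_Sle, Fin.snoc_last, and_true]
        have hs : ∑ i : Fin (N + 1), Fin.snoc c x i = (∑ i : Fin N, c i) + x := by
          rw [Fin.sum_univ_castSucc]
          simp [Fin.snoc_castSucc]
        omega
      case refine_3 =>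
        intro b hb
        simp only [mem_filter] at hb
        have h2 := hb.2
        subst h2
        exact Fin.snoc_init_self b
      case refine_4 =>
        intro c _
        simp
    rw [Finset.sum_congr rfl hfib]
    have : ∀ x ∈ range (n + 1), (Sle N (n - x)).card = ((n - x) + N).choose N :=
      fun x _ => ih (n - x)
    rw [Finset.sum_congr rfl this]
    have hre : ∑ x ∈ range (n + 1), ((n - x) + N).choose N
        = ∑ x ∈ range (n + 1), (x + N).choose N := by
      rw [← Finset.sum_range_reflect]
      apply Finset.sum_congr rfl
      intro x hx
      rw [mem_range] at hx
      congr 2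
      omega
    rw [hre, Nat.sum_range_add_choose, Nat.add_assoc]

def Pfin (D m n : ℕ) : Finset ((Fin D → ℕ) × ℕ) :=
  ((Fintype.piFinset fun _ : Fin D => range (n + 1)) ×ˢ range (n * m + 1)).filter
    (fun p => (∑ i, p.1 i) ≤ n ∧ p.2 ≤ (n - ∑ i, p.1 i) * m)

lemma mem_Pfin {D m n : ℕ} {p : (Fin D → ℕ) × ℕ} :
    p ∈ Pfin D m n ↔ (∑ i, p.1 i) ≤ n ∧ p.2 ≤ (n - ∑ i, p.1 i) * m := by
  simp only [Pfin, mem_filter, Finset.mem_product, Fintype.mem_piFinset, mem_range,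
    Nat.lt_succ_iff]
  constructor
  · exact fun h => h.2
  · intro h
    refine ⟨⟨fun i => le_trans (Finset.single_le_sum (fun i _ => Nat.zero_le _)
      (mem_univ i)) h.1, ?_⟩, h⟩
    exact le_trans h.2 (mul_le_mul_left (Nat.sub_le n _) m)

lemma sum_slack (D n : ℕ) :
    ∑ c ∈ Sle D (n + 1), ((n + 1) - ∑ i, c i) = (Sle (D + 1) n).card := by
  have hmaps : ∀ b ∈ Sle (D + 1) n, Fin.init b ∈ Sle D (n + 1) := by
    intro b hb
    rw [mem_Sle] at hb ⊢
    have hs : ∑ i : Fin (D + 1), b i = (∑ i : Fin D, Fin.init b i) + b (Fin.last D) := by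
      rw [Fin.sum_univ_castSucc]; rfl
    omega
  rw [Finset.card_eq_sum_card_fiberwise hmaps]
  apply Finset.sum_congr rfl
  intro c hc
  rw [eq_comm]
  have hinj : Function.Injective (fun x => Fin.snoc c x : ℕ → Fin (D + 1) → ℕ) := by
    intro x y hxy
    have := congrArg (fun f => f (Fin.last D)) hxy
    simpa using this
  have heq : (Sle (D + 1) n).filter (fun b => Fin.init b = c)
      = image (fun x => Fin.snoc c x) (range ((n + 1) - ∑ i, c i)) := by
    ext b
    simp only [mem_filter, mem_Sle, Finset.mem_image, mem_range]
    constructor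
    · rintro ⟨h1, h2⟩
      refine ⟨b (Fin.last D), ?_, ?_⟩
      · have hs : ∑ i : Fin (D + 1), b i = (∑ i : Fin D, Fin.init b i) + b (Fin.last D) := by
          rw [Fin.sum_univ_castSucc]; rfl
        rw [h2] at hs
        omega
      · rw [← h2]; exact Fin.snoc_init_self b
    · rintro ⟨x, hx, rfl⟩
      have hs : ∑ i : Fin (D + 1), Fin.snoc c x i = (∑ i : Fin D, c i) + x := by
        rw [Fin.sum_univ_castSucc]; simp [Fin.snoc_castSucc]
      refine ⟨by omega, by simp⟩
  rw [heq, Finset.card_image_of_injective _ hinj, Finset.card_range]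

lemma card_Pfin (D m n : ℕ) :
    (Pfin D m (n + 1)).card = (n + 1 + D).choose D + m * ((n + (D + 1)).choose (D + 1)) := by
  have hmaps : ∀ p ∈ Pfin D m (n + 1), p.1 ∈ Sle D (n + 1) :=
    fun p hp => mem_Sle.mpr (mem_Pfin.mp hp).1
  rw [Finset.card_eq_sum_card_fiberwise hmaps]
  have hfib : ∀ c ∈ Sle D (n + 1),
      ((Pfin D m (n + 1)).filter (fun p => p.1 = c)).card = ((n + 1) - ∑ i, c i) * m + 1 := by
    intro c hc
    have heq : (Pfin D m (n + 1)).filter (fun p => p.1 = c)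
        = {c} ×ˢ range (((n + 1) - ∑ i, c i) * m + 1) := by
      ext ⟨c', t⟩
      simp only [mem_filter, mem_Pfin, Finset.mem_product, Finset.mem_singleton, mem_range,
        Nat.lt_succ_iff]
      rw [mem_Sle] at hc
      constructor
      · rintro ⟨⟨h1, h2⟩, rfl⟩; exact ⟨rfl, h2⟩
      · rintro ⟨rfl, h2⟩; exact ⟨⟨hc, h2⟩, rfl⟩
    rw [heq, Finset.card_product, Finset.card_singleton, one_mul, Finset.card_range]
  rw [Finset.sum_congr rfl hfib, Finset.sum_add_distrib, Finset.sum_const, smul_eq_mul, mul_one,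
    ← Finset.sum_mul, sum_slack, card_Sle, card_Sle]
  ring

section KfoldBasic
variable {E : Type*} [DecidableEq E] [AddCommMonoid E]

lemma kfold_one (B : Finset E) : kfold 1 B = B := by
  show kfold 0 B + B = B
  show (0 : Finset E) + B = B
  exact zero_add B

lemma singleton_add_eq_image (a : E) (B : Finset E) : {a} + B = B.image (a + ·) := by
  ext x
  simp only [Finset.mem_add, Finset.mem_singleton, Finset.mem_image]
  constructor
  · rintro ⟨y, rfl, z, hz, rfl⟩
    exact ⟨z, hz, rfl⟩
  · rintro ⟨z, hz, rfl⟩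
    exact ⟨a, rfl, z, hz, rfl⟩

lemma kfold_singleton_add (a : E) (B : Finset E) (n : ℕ) :
    kfold n ({a} + B) = {n • a} + kfold n B := by
  induction n with
  | zero =>
    show ({0} : Finset E) = {(0 : ℕ) • a} + {0}
    rw [Finset.singleton_add_singleton]
    simp
  | succ n ih =>
    show kfold n ({a} + B) + ({a} + B) = _
    rw [ih, add_add_add_comm, Finset.singleton_add_singleton, ← succ_nsmul]
    rfl

end KfoldBasic

section Geom
variable {D : ℕ} (v : Fin (D + 2) → (Fin (D + 1) → ℝ)) (w : Fin (D + 1) → ℝ) (m : ℕ)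

def Ffun : (Fin D → ℕ) × ℕ → (Fin (D + 1) → ℝ) := fun p =>
  (∑ i : Fin D, (p.1 i : ℝ) • (v i.succ.castSucc - v 0)) + (p.2 : ℝ) • w

noncomputable def Aset : Finset (Fin (D + 1) → ℝ) :=
  Finset.image (fun i => v i - v 0) Finset.univ ∪
    Finset.image (fun j : ℕ => (j : ℝ) • w) (Finset.range (m + 1))

lemma Ffun_add_w (c : Fin D → ℕ) (t j : ℕ) :
    Ffun v w (c, t + j) = Ffun v w (c, t) + (j : ℝ) • w := by
  simp only [Ffun, Nat.cast_add, add_smul]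
  abel

lemma Ffun_add_e (c : Fin D → ℕ) (t : ℕ) (j : Fin D) :
    Ffun v w (c + Pi.single j 1, t) = Ffun v w (c, t) + (v j.succ.castSucc - v 0) := by
  simp only [Ffun]
  have h1 : ∀ i : Fin D, (((c + Pi.single j 1 : Fin D → ℕ) i) : ℝ) • (v i.succ.castSucc - v 0)
      = (c i : ℝ) • (v i.succ.castSucc - v 0) +
        (if i = j then v i.succ.castSucc - v 0 else 0) := by
    intro i
    by_cases h : i = j
    · subst h
      simp [Pi.single_apply, add_smul]
    · simp [Pi.single_apply, h]
  rw [Finset.sum_congr rfl (fun i _ => h1 i), Finset.sum_add_distrib, Finset.sum_ite_eq' univ j]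
  simp only [mem_univ, if_pos]
  abel

lemma sum_single (c : Fin D → ℕ) (j : Fin D) :
    (∑ i, (c + Pi.single j 1 : Fin D → ℕ) i) = (∑ i, c i) + 1 := by
  simp [Finset.sum_add_distrib, Finset.sum_pi_single']

lemma e_mem_Aset (q : Fin D) : v q.succ.castSucc - v 0 ∈ Aset v w m :=
  Finset.mem_union_left _ (Finset.mem_image_of_mem _ (mem_univ _))

lemma jw_mem_Aset {j : ℕ} (hj : j ≤ m) : (j : ℝ) • w ∈ Aset v w m :=
  Finset.mem_union_right _ (Finset.mem_image_of_mem _ (mem_range.mpr (Nat.lt_succ_of_le hj)))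

lemma Aset_cases (hw : v 0 + (m : ℝ) • w = v (Fin.last (D + 1)))
    {a : Fin (D + 1) → ℝ} (ha : a ∈ Aset v w m) :
    (∃ q : Fin D, a = v q.succ.castSucc - v 0) ∨ ∃ j ≤ m, a = (j : ℝ) • w := by
  simp only [Aset, Finset.mem_union, Finset.mem_image, Finset.mem_univ, true_and,
    Finset.mem_range, Nat.lt_succ_iff] at ha
  rcases ha with ⟨i, rfl⟩ | ⟨j, hj, rfl⟩
  · induction i using Fin.cases with
    | zero => exact Or.inr ⟨0, Nat.zero_le m, by simp⟩
    | succ j =>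
      induction j using Fin.lastCases with
      | last =>
        refine Or.inr ⟨m, le_refl m, ?_⟩
        rw [Fin.succ_last, ← hw]
        abel
      | cast q =>
        exact Or.inl ⟨q, by rw [Fin.succ_castSucc]⟩
  · exact Or.inr ⟨j, hj, rfl⟩

lemma kfold_Aset (hw : v 0 + (m : ℝ) • w = v (Fin.last (D + 1))) (n : ℕ) :
    kfold n (Aset v w m) = Finset.image (Ffun v w) (Pfin D m n) := by
  induction n with
  | zero =>
    have hP : Pfin D m 0 = {((0 : Fin D → ℕ), 0)} := by
      ext ⟨c, t⟩
      simp only [mem_Pfin, Finset.mem_singleton, Prod.mk.injEq]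
      constructor
      · rintro ⟨h1, h2⟩
        have hc0 : ∑ i, c i = 0 := Nat.le_zero.mp h1
        have hc : c = 0 := by
          funext i
          have := Finset.sum_eq_zero_iff.mp hc0 i (mem_univ i)
          simpa using this
        have hz : (0 - ∑ i, c i) * m = 0 := by
          rw [hc0]
          simp
        exact ⟨hc, by omega⟩
      · rintro ⟨rfl, rfl⟩
        constructor <;> simp
    rw [hP]
    show ({0} : Finset (Fin (D + 1) → ℝ)) = _
    rw [Finset.image_singleton]
    simp [Ffun]
  | succ n ih =>
    show kfold n (Aset v w m) + Aset v w m = _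
    rw [ih]
    apply Finset.Subset.antisymm
    · intro x hx
      rw [Finset.mem_add] at hx
      obtain ⟨y, hy, a, ha, rfl⟩ := hx
      obtain ⟨⟨c, t⟩, hp, rfl⟩ := Finset.mem_image.mp hy
      rw [mem_Pfin] at hp
      dsimp only at hp
      rcases Aset_cases v w m hw ha with ⟨q, rfl⟩ | ⟨j, hj, rfl⟩
      · refine Finset.mem_image.mpr ⟨(c + Pi.single q 1, t), ?_, ?_⟩
        · rw [mem_Pfin]
          dsimp only
          rw [sum_single]

          constructor
          · omega
          · have he : n + 1 - ((∑ i, c i) + 1) = n - ∑ i, c i := by omega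
            rw [he]
            exact hp.2
        · rw [Ffun_add_e]
      · refine Finset.mem_image.mpr ⟨(c, t + j), ?_, ?_⟩
        · rw [mem_Pfin]
          dsimp only
          refine ⟨le_trans hp.1 (Nat.le_succ n), ?_⟩
          have h1 : (n + 1 - ∑ i, c i) * m = (n - ∑ i, c i) * m + m := by
            have he : n + 1 - ∑ i, c i = (n - ∑ i, c i) + 1 := by omega
            rw [he, add_mul, one_mul]
          rw [h1]
          exact add_le_add hp.2 hj
        · rw [Ffun_add_w]
    · intro x hx
      obtain ⟨⟨c, t⟩, hp, rfl⟩ := Finset.mem_image.mp hx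
      rw [mem_Pfin] at hp
      dsimp only at hp
      obtain ⟨h1, h2⟩ := hp
      rcases Nat.lt_or_ge (∑ i, c i) (n + 1) with hs | hs
      · have hsn : ∑ i, c i ≤ n := by omega
        set X := (n - ∑ i, c i) * m with hX
        have hXm : (n + 1 - ∑ i, c i) * m = X + m := by
          rw [hX]
          have he : n + 1 - ∑ i, c i = (n - ∑ i, c i) + 1 := by omega
          rw [he, add_mul, one_mul]
        rw [hXm] at h2
        have hdecomp : ∃ t' j, t = t' + j ∧ t' ≤ X ∧ j ≤ m := by
          rcases le_or_gt t m with h | h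
          · exact ⟨0, t, by omega, Nat.zero_le X, h⟩
          · exact ⟨t - m, m, by omega, by omega, le_refl m⟩
        obtain ⟨t', j, rfl, ht', hj⟩ := hdecomp
        rw [Ffun_add_w]
        have hmem : ((c, t') : (Fin D → ℕ) × ℕ) ∈ Pfin D m n := by
          rw [mem_Pfin]
          dsimp only
          exact ⟨hsn, ht'⟩
        exact Finset.add_mem_add (Finset.mem_image_of_mem _ hmem) (jw_mem_Aset v w m hj)
      · have hseq : ∑ i, c i = n + 1 := le_antisymm h1 hs
        have ht : t = 0 := by
          have h0 : (n + 1 - ∑ i, c i) * m = 0 := by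
            rw [hseq]
            simp
          omega
        subst ht
        have hex : ∃ j, c j ≠ 0 := by
          by_contra h
          push_neg at h
          have : ∑ i, c i = 0 := Finset.sum_eq_zero (fun i _ => h i)
          omega
        obtain ⟨j, hj⟩ := hex
        set c' : Fin D → ℕ := Function.update c j (c j - 1) with hc'
        have hcc : c' + Pi.single j 1 = c := by
          funext i
          by_cases h : i = j
          · subst h
            simp only [hc', Pi.add_apply, Function.update_self, Pi.single_eq_same]
            omega
          · simp [hc', Function.update_of_ne h, Pi.single_apply, h]
        have hss : ∑ i, c i = (∑ i, c' i) + 1 := by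
          conv_lhs => rw [← hcc]
          exact sum_single c' j
        rw [← hcc, Ffun_add_e]
        have hmem : ((c', 0) : (Fin D → ℕ) × ℕ) ∈ Pfin D m n := by
          rw [mem_Pfin]
          dsimp only
          exact ⟨by omega, Nat.zero_le _⟩
        exact Finset.add_mem_add (Finset.mem_image_of_mem _ hmem) (e_mem_Aset v w m j)

lemma Ffun_injective (hv : AffineIndependent ℝ v) (hm : 1 ≤ m)
    (hw : v 0 + (m : ℝ) • w = v (Fin.last (D + 1))) :
    Function.Injective (Ffun v w) := by
  have h0 := (affineIndependent_iff_linearIndependent_vsub ℝ v 0).mp hv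
  have he : LinearIndependent ℝ (fun i : Fin (D + 1) => v i.succ - v 0) := by
    have h1 := h0.comp
      (fun i : Fin (D + 1) => (⟨i.succ, Fin.succ_ne_zero i⟩ : {x : Fin (D + 2) // x ≠ 0}))
      (fun i j hij => by
        apply Fin.succ_injective
        exact congrArg Subtype.val hij)
    simpa [Function.comp_def, vsub_eq_sub] using h1
  have hmR : (m : ℝ) ≠ 0 := Nat.cast_ne_zero.mpr (by omega)
  have helast : v (Fin.last D).succ - v 0 = (m : ℝ) • w := by
    rw [Fin.succ_last, ← hw]
    abel
  have hrep : ∀ r : (Fin D → ℕ) × ℕ, Ffun v w r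
      = ∑ i : Fin (D + 1),
          ((Fin.snoc (fun i : Fin D => (r.1 i : ℝ)) ((r.2 : ℝ) / m) : Fin (D + 1) → ℝ) i) • (v i.succ - v 0) := by
    intro r
    rw [Fin.sum_univ_castSucc]
    simp only [Fin.snoc_castSucc, Fin.snoc_last]
    rw [helast, smul_smul, div_mul_cancel₀ _ hmR]
    simp only [Ffun, Fin.succ_castSucc]
  intro p q hpq
  have hli := Fintype.linearIndependent_iff.mp he
  have hz : ∑ i : Fin (D + 1),
      (((Fin.snoc (fun i : Fin D => (p.1 i : ℝ)) ((p.2 : ℝ) / m) : Fin (D + 1) → ℝ) i)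
        - ((Fin.snoc (fun i : Fin D => (q.1 i : ℝ)) ((q.2 : ℝ) / m) : Fin (D + 1) → ℝ) i)) • (v i.succ - v 0)
      = 0 := by
    simp only [sub_smul, Finset.sum_sub_distrib]
    rw [← hrep p, ← hrep q, hpq, sub_self]
  have hcoef := fun i => sub_eq_zero.mp (hli _ hz i)
  have h1 : p.1 = q.1 := by
    funext i
    have hi := hcoef i.castSucc
    simp only [Fin.snoc_castSucc] at hi
    exact_mod_cast hi
  have h2 : p.2 = q.2 := by
    have hi := hcoef (Fin.last D)
    simp only [Fin.snoc_last] at hi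
    rw [div_eq_div_iff hmR hmR] at hi
    exact_mod_cast mul_right_cancel₀ hmR hi
  exact Prod.ext h1 h2

end Geom


/-- If `A` consists of the vertices of a `d`-simplex together with an
arithmetic progression along the edge `[v₀, v_d]` starting at `v₀` and ending
at `v_d`, then equality holds in the Freiman–Matolcsi–Ruzsa inequality. -/
theorem stmt_16 (d k : ℕ) (hd : 1 ≤ d) (hk : 2 ≤ k)
    (v : Fin (d + 1) → (Fin d → ℝ)) (hv : AffineIndependent ℝ v)
    (w : Fin d → ℝ) (m : ℕ) (hm : 1 ≤ m)
    (hw : v 0 + (m : ℝ) • w = v (Fin.last d))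
    (A : Finset (Fin d → ℝ))
    (hA : A = Finset.image v Finset.univ ∪
      Finset.image (fun j : ℕ => v 0 + (j : ℝ) • w) (Finset.range (m + 1))) :
    ((kfold k A).card : ℤ) =
      (d + k - 1).choose (k - 1) * A.card - ((k : ℤ) - 1) * (d + k - 1).choose k := by
  obtain ⟨D, rfl⟩ : ∃ D, d = D + 1 := ⟨d - 1, by omega⟩
  obtain ⟨K, rfl⟩ : ∃ K, k = K + 2 := ⟨k - 2, by omega⟩
  have hA' : A = {v 0} + Aset v w m := by
    rw [singleton_add_eq_image, hA, Aset, Finset.image_union, Finset.image_image,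
      Finset.image_image]
    congr 1
    · have hco : ((fun x => v 0 + x) ∘ fun i => v i - v 0) = v := by
        funext i
        simp
      rw [hco]
  have hinj : Function.Injective (Ffun v w) := Ffun_injective v w m hv hm hw
  have hkA : kfold (K + 2) A = {(K + 2) • v 0} + Finset.image (Ffun v w) (Pfin D m (K + 2)) := by
    rw [hA', kfold_singleton_add, kfold_Aset v w m hw]
  have hcard : (kfold (K + 2) A).card = (Pfin D m (K + 2)).card := by
    rw [hkA, Finset.card_singleton_add, Finset.card_image_of_injective _ hinj]
  have hAs : Aset v w m = Finset.image (Ffun v w) (Pfin D m 1) := by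
    rw [← kfold_Aset v w m hw 1, kfold_one]
  have hAcard : A.card = (Pfin D m 1).card := by
    rw [hA', hAs, Finset.card_singleton_add, Finset.card_image_of_injective _ hinj]
  have hc1 : (Pfin D m 1).card = (0 + 1 + D).choose D + m * ((0 + (D + 1)).choose (D + 1)) :=
    card_Pfin D m 0
  have hc2 : (Pfin D m (K + 2)).card
      = (K + 1 + 1 + D).choose D + m * ((K + 1 + (D + 1)).choose (D + 1)) :=
    card_Pfin D m (K + 1)
  have hA2 : A.card = D + 1 + m := by
    rw [hAcard, hc1, show 0 + 1 + D = D + 1 by omega, show 0 + (D + 1) = D + 1 by omega,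
      Nat.choose_succ_self_right, Nat.choose_self, mul_one]
  rw [hcard, hc2, hA2, show K + 1 + 1 + D = D + K + 2 by omega,
    show K + 1 + (D + 1) = D + K + 2 by omega, show D + 1 + (K + 2) - 1 = D + K + 2 by omega,
    show K + 2 - 1 = K + 1 by omega]
  have hsymm1 : (D + K + 2).choose (K + 1) = (D + K + 2).choose (D + 1) := by
    have h := Nat.choose_symm (show K + 1 ≤ D + K + 2 by omega)
    rw [show D + K + 2 - (K + 1) = D + 1 by omega] at h
    exact h.symm
  have hsymm2 : (D + K + 2).choose (K + 2) = (D + K + 2).choose D := by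
    have h := Nat.choose_symm (show K + 2 ≤ D + K + 2 by omega)
    rw [show D + K + 2 - (K + 2) = D by omega] at h
    exact h.symm
  rw [hsymm1, hsymm2]
  have key : (D + K + 2).choose (D + 1) * (D + 1) = (D + K + 2).choose D * (K + 2) := by
    have h := Nat.choose_succ_right_eq (D + K + 2) D
    rw [show D + K + 2 - D = K + 2 by omega] at h
    exact h
  have keyZ : ((D + K + 2).choose (D + 1) : ℤ) * (D + 1) = ((D + K + 2).choose D : ℤ) * (K + 2) :=
    by exact_mod_cast key
  push_cast
  linear_combination -keyZ
end

section
/- Let A ⊆ ℝ² consist of the three vertices of a triangle together with the midpoints of its three sides (so |A| = 6). Then for every k ≥ 2, |kA| = C(k+1, k-1)·6 - (k-1)·C(k+1, k); equivalently |kA| = 2k² + 3k + 1. -/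
open Finset Pointwise

/-- Lattice points `(a,b)` with `a + b ≤ n`. -/
def Pset (n : ℕ) : Finset (ℕ × ℕ) :=
  (range (n+1) ×ˢ range (n+1)).filter (fun p => p.1 + p.2 ≤ n)

lemma mem_Pset {n : ℕ} {p : ℕ × ℕ} : p ∈ Pset n ↔ p.1 + p.2 ≤ n := by
  simp only [Pset, mem_filter, mem_product, mem_range]; omega

/-- Parametrization of `k`-fold sums by half-integer barycentric coordinates. -/
noncomputable def Phi (v : Fin 3 → Fin 2 → ℝ) (n : ℕ) (p : ℕ × ℕ) : Fin 2 → ℝ :=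
  ((p.1:ℝ)/2) • v 0 + ((p.2:ℝ)/2) • v 1 + (((n:ℝ) - p.1 - p.2)/2) • v 2

lemma Phi_add (v : Fin 3 → Fin 2 → ℝ) (m n : ℕ) (p q : ℕ × ℕ) :
    Phi v m p + Phi v n q = Phi v (m+n) (p+q) := by
  simp only [Phi, Prod.fst_add, Prod.snd_add]; push_cast; module

lemma Phi_injective (v : Fin 3 → Fin 2 → ℝ) (hv : AffineIndependent ℝ v) (n : ℕ) :
    Function.Injective (Phi v n) := by
  intro p q h
  set w : Fin 3 → ℝ :=
    ![((p.1:ℝ)-q.1)/2, ((p.2:ℝ)-q.2)/2, (((q.1:ℝ)+q.2)-((p.1:ℝ)+p.2))/2] with hw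
  have hs : ∑ e ∈ Finset.univ, w e = 0 := by
    simp [hw, Fin.sum_univ_three]; ring
  have hc : ∑ e ∈ Finset.univ, w e • v e = 0 := by
    have h' : Phi v n p - Phi v n q = 0 := by rw [h, sub_self]
    calc ∑ e ∈ Finset.univ, w e • v e = Phi v n p - Phi v n q := by
          simp only [Phi, hw, Fin.sum_univ_three, Matrix.cons_val_zero, Matrix.cons_val_one,
            Matrix.head_cons, Matrix.cons_val_two, Matrix.tail_cons]
          module
      _ = 0 := h'
  have h0 := affineIndependent_iff.1 hv Finset.univ w hs hc 0 (mem_univ 0)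
  have h1 := affineIndependent_iff.1 hv Finset.univ w hs hc 1 (mem_univ 1)
  simp only [hw, Matrix.cons_val_zero, Matrix.cons_val_one, Matrix.head_cons,
    div_eq_zero_iff, sub_eq_zero] at h0 h1
  have e0 : (p.1:ℝ) = q.1 := by rcases h0 with h0 | h0 <;> [exact h0; norm_num at h0]
  have e1 : (p.2:ℝ) = q.2 := by rcases h1 with h1 | h1 <;> [exact h1; norm_num at h1]
  exact Prod.ext (Nat.cast_injective e0) (Nat.cast_injective e1)

lemma image_add_image (v : Fin 3 → Fin 2 → ℝ) (m n : ℕ) :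
    (Pset m).image (Phi v m) + (Pset n).image (Phi v n)
      = (Pset (m+n)).image (Phi v (m+n)) := by
  ext x
  simp only [Finset.mem_add, Finset.mem_image, mem_Pset]
  constructor
  · rintro ⟨y, ⟨p, hp, rfl⟩, z, ⟨q, hq, rfl⟩, rfl⟩
    exact ⟨p + q, by simp only [Prod.fst_add, Prod.snd_add]; omega, (Phi_add v m n p q).symm⟩
  · rintro ⟨r, hr, rfl⟩
    set a := min r.1 m with ha
    set b := min r.2 (m - a) with hb
    refine ⟨Phi v m (a, b), ⟨(a, b), by omega, rfl⟩,
      Phi v n (r.1 - a, r.2 - b), ⟨(r.1 - a, r.2 - b), by omega, rfl⟩, ?_⟩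
    rw [Phi_add]
    have : (a, b) + (r.1 - a, r.2 - b) = r := by
      have h1 : a + (r.1 - a) = r.1 := by omega
      have h2 : b + (r.2 - b) = r.2 := by omega
      exact Prod.ext h1 h2
    rw [this]

lemma kfold_eq (v : Fin 3 → Fin 2 → ℝ) (A : Finset (Fin 2 → ℝ))
    (hA2 : A = (Pset 2).image (Phi v 2)) :
    ∀ n : ℕ, kfold n A = (Pset (2*n)).image (Phi v (2*n)) := by
  intro n
  induction n with
  | zero =>
      show ({0} : Finset (Fin 2 → ℝ)) = _
      have hP0 : Pset 0 = {(0,0)} := by decide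
      rw [Nat.mul_zero, hP0, Finset.image_singleton]
      congr 1
      simp [Phi]
  | succ n ih =>
      show kfold n A + A = _
      rw [ih, hA2, image_add_image]
      congr 1

lemma A_eq_image (v : Fin 3 → Fin 2 → ℝ) :
    ({v 0, v 1, v 2, midpoint ℝ (v 0) (v 1), midpoint ℝ (v 1) (v 2),
      midpoint ℝ (v 0) (v 2)} : Finset (Fin 2 → ℝ)) = (Pset 2).image (Phi v 2) := by
  have hP : Pset 2 = {(2,0),(0,2),(0,0),(1,1),(0,1),(1,0)} := by decide
  rw [hP]
  simp only [Finset.image_insert, Finset.image_singleton]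
  have e0 : Phi v 2 (2,0) = v 0 := by simp only [Phi]; norm_num
  have e1 : Phi v 2 (0,2) = v 1 := by simp only [Phi]; norm_num
  have e2 : Phi v 2 (0,0) = v 2 := by simp only [Phi]; norm_num
  have e3 : Phi v 2 (1,1) = midpoint ℝ (v 0) (v 1) := by
    rw [midpoint_eq_smul_add]; simp only [Phi]; norm_num
  have e4 : Phi v 2 (0,1) = midpoint ℝ (v 1) (v 2) := by
    rw [midpoint_eq_smul_add]; simp only [Phi]; norm_num
  have e5 : Phi v 2 (1,0) = midpoint ℝ (v 0) (v 2) := by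
    rw [midpoint_eq_smul_add]; simp only [Phi]; norm_num
  rw [e0, e1, e2, e3, e4, e5]

lemma two_mul_card_Pset (n : ℕ) : 2 * (Pset n).card = (n+1) * (n+2) := by
  have h : Pset n = (range (n+1)).biUnion (fun a => ({a} : Finset ℕ) ×ˢ range (n+1-a)) := by
    ext p
    simp only [Pset, mem_filter, mem_product, mem_range, mem_biUnion, mem_singleton]
    constructor
    · rintro ⟨⟨h1, h2⟩, h3⟩; exact ⟨p.1, by omega, rfl, by omega⟩
    · rintro ⟨a, ha, rfl, hb⟩; omega
  have hd : ∀ a ∈ range (n+1), ∀ b ∈ range (n+1), a ≠ b →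
      Disjoint (({a} : Finset ℕ) ×ˢ range (n+1-a)) (({b} : Finset ℕ) ×ˢ range (n+1-b)) := by
    intro a _ b _ hab
    simp only [Finset.disjoint_left, mem_product, mem_singleton, mem_range]
    rintro p ⟨rfl, -⟩ ⟨rfl, -⟩
    exact hab rfl
  rw [h, Finset.card_biUnion hd]
  simp only [Finset.card_product, Finset.card_singleton, Finset.card_range, one_mul]
  have h2 : ∑ a ∈ range (n+1), (n+1-a) = ∑ a ∈ range (n+1), (a+1) := by
    rw [← Finset.sum_range_reflect]
    exact Finset.sum_congr rfl (fun i hi => by rw [mem_range] at hi; omega)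
  rw [h2, Finset.sum_add_distrib, Finset.sum_const, Finset.card_range, smul_eq_mul, mul_one]
  have h3 : (∑ i ∈ range (n+1), i) * 2 = (n+1) * n := by
    rw [Finset.sum_range_id_mul_two]; simp
  nlinarith [h3]

/-- If `A` consists of the vertices of a nondegenerate triangle in `ℝ²`
together with the midpoints of its three sides, then for every `k ≥ 2`,
`|kA| = C(k+1,k-1)·6 - (k-1)·C(k+1,k) = 2k² + 3k + 1`. -/
theorem stmt_17 (v : Fin 3 → (Fin 2 → ℝ)) (hv : AffineIndependent ℝ v)
    (A : Finset (Fin 2 → ℝ))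
    (hA : A = {v 0, v 1, v 2, midpoint ℝ (v 0) (v 1), midpoint ℝ (v 1) (v 2),
      midpoint ℝ (v 0) (v 2)})
    (k : ℕ) (hk : 2 ≤ k) :
    ((kfold k A).card : ℤ) =
        (k + 1).choose (k - 1) * 6 - ((k : ℤ) - 1) * (k + 1).choose k ∧
      (kfold k A).card = 2 * k ^ 2 + 3 * k + 1 := by
  have hA2 : A = (Pset 2).image (Phi v 2) := by rw [hA, A_eq_image]
  have hcard : (kfold k A).card = (Pset (2*k)).card := by
    rw [kfold_eq v A hA2 k]
    exact Finset.card_image_of_injective _ (Phi_injective v hv _)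
  have h2c : 2 * (Pset (2*k)).card = (2*k+1) * (2*k+2) := two_mul_card_Pset (2*k)
  have hmain : (kfold k A).card = 2 * k ^ 2 + 3 * k + 1 := by
    rw [hcard]
    have : (2*k+1) * (2*k+2) = 2 * (2 * k ^ 2 + 3 * k + 1) := by ring
    omega
  refine ⟨?_, hmain⟩
  have hch1 : (k + 1).choose (k - 1) = (k + 1).choose 2 := by
    have : k - 1 = (k + 1) - 2 := by omega
    rw [this, Nat.choose_symm (by omega)]
  have hch2 : (k + 1).choose k = k + 1 := Nat.choose_succ_self_right k
  have hch3 : 2 * ((k + 1).choose 2) = (k + 1) * k := by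
    rw [Nat.choose_two_right]
    have hdvd : 2 ∣ (k + 1) * k := by
      rcases Nat.even_or_odd k with h | h
      · exact Dvd.dvd.mul_left h.two_dvd _
      · exact Dvd.dvd.mul_right (h.add_one).two_dvd _
    simp only [Nat.add_sub_cancel]
    omega
  rw [hmain, hch1, hch2]
  have hch3' : (2 : ℤ) * ((k + 1).choose 2 : ℤ) = ((k : ℤ) + 1) * k := by
    exact_mod_cast congrArg (Nat.cast : ℕ → ℤ) hch3
  push_cast
  linear_combination -3 * hch3'
end
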